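/- arXiv:2604.18410 — 4 statements merged into one kernel-verified Lean document; each statement's English description precedes it below -/
import Mathlib

section
/- Let G be a countable discrete group acting on the circle 𝕋 by orientation-preserving homeomorphisms. Then exactly one of the following holds: (1) the action has a finite orbit; (2) the action is minimal; (3) the action admits a unique minimal closed invariant set, which is homeomorphic to the Cantor set. -/
open MeasureTheory Topology Filter Set Function

noncomputable section

/-- The circle `ℝ/ℤ`. -/
abbrev T1 := UnitAddCircle

/-- `F : ℝ → ℝ` is an (increasing, continuous) lift of the circle map `f`. -/
def IsLiftOf (F : ℝ → ℝ) (f : T1 → T1) : Prop :=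
  Continuous F ∧ StrictMono F ∧ (∀ x : ℝ, F (x + 1) = F x + 1) ∧
    ∀ x : ℝ, ((F x : T1)) = f ((x : T1))

/-- A circle map is orientation preserving if it admits an increasing lift. -/
def OrientationPreservingMap (f : T1 → T1) : Prop := ∃ F : ℝ → ℝ, IsLiftOf F f

/-- `ρ` is the rotation number of `f`:  `Fⁿ(x)/n → ρ  (mod ℤ)` for a lift `F`. -/
def HasRotationNumber (f : T1 → T1) (ρ : T1) : Prop :=
  ∃ F : ℝ → ℝ, IsLiftOf F f ∧
    ∀ x : ℝ, Tendsto (fun n : ℕ => ((F^[n] x / (n : ℝ) : ℝ) : T1)) atTop (nhds ρ)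

variable (G : Type*) [Group G] [MulAction G T1]

/-- A set is invariant under the action. -/
def InvariantSet (S : Set T1) : Prop := ∀ g : G, ∀ x ∈ S, g • x ∈ S

/-- A minimal set: nonempty, closed, invariant, with no proper nonempty closed
invariant subset. -/
def IsMinimalSet (S : Set T1) : Prop :=
  S.Nonempty ∧ IsClosed S ∧ InvariantSet G S ∧
    ∀ Z : Set T1, Z.Nonempty → IsClosed Z → InvariantSet G Z → Z ⊆ S → Z = S

/-- The action (by homeomorphisms) is orientation preserving. -/
def OrientationPreservingAction : Prop :=
  (∀ g : G, Continuous fun x : T1 => g • x) ∧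
    ∀ g : G, OrientationPreservingMap fun x : T1 => g • x

/-- The action is free. -/
def FreeAction : Prop := ∀ (g : G) (x : T1), g • x = x → g = 1

/-- A Denjoy action: orientation preserving, non-minimal, all orbits infinite. -/
def IsDenjoy : Prop :=
  OrientationPreservingAction G ∧ ¬ IsMinimalSet G (Set.univ : Set T1) ∧
    ∀ x : T1, (MulAction.orbit G x).Infinite


namespace S0

lemma pi_continuous : Continuous (fun x : ℝ => (x : T1)) := continuous_quotient_mk'

lemma pi_open : IsOpenMap (fun x : ℝ => (x : T1)) := QuotientAddGroup.isOpenMap_coe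

lemma pi_surj : Function.Surjective (fun x : ℝ => (x : T1)) := fun q => ⟨q.out, QuotientAddGroup.out_eq' q⟩

lemma pi_dist_le (x y : ℝ) : dist (x : T1) (y : T1) ≤ |x - y| := by
  rw [dist_eq_norm]
  rw [← AddCircle.coe_sub]
  simpa [Real.norm_eq_abs] using QuotientAddGroup.norm_mk_le_norm (S := AddSubgroup.zmultiples (1:ℝ)) (m := x - y)

lemma pi_injOn_Ioo (z : ℝ) : Set.InjOn (fun x : ℝ => (x : T1)) (Set.Ioo z (z+1)) := by
  intro x hx y hy hxy
  have := (AddCircle.coe_eq_coe_iff_of_mem_Ico (a := z) (p := (1:ℝ))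
      (Set.Ioo_subset_Ico_self hx) (Set.Ioo_subset_Ico_self hy)).1 hxy
  exact this

instance : LocallyConnectedSpace T1 := by
  apply locallyConnectedSpace_of_connected_bases
    (fun x r => (fun t : ℝ => (t : T1)) '' Metric.ball x.out r) (fun x r => 0 < r)
  · intro x
    have hmap : 𝓝 x = Filter.map (fun t : ℝ => (t : T1)) (𝓝 x.out) := by
      conv_lhs => rw [← QuotientAddGroup.out_eq' x]
      exact (QuotientAddGroup.isOpenQuotientMap_mk.map_nhds_eq _).symm
    rw [hmap]
    exact (Metric.nhds_basis_ball).map _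
  · intro x r _
    exact ((convex_ball x.out r).isPreconnected).image _ pi_continuous.continuousOn


lemma pi_rep (z₀ : ℝ) (y : T1) : ∃ t ∈ Set.Ico z₀ (z₀+1), (t : T1) = y := by
  refine ⟨toIcoMod one_pos z₀ y.out, toIcoMod_mem_Ico one_pos z₀ y.out, ?_⟩
  conv_rhs => rw [← QuotientAddGroup.out_eq' y]
  rw [QuotientAddGroup.eq_iff_sub_mem, toIcoMod_sub_self]
  exact AddSubgroup.zsmul_mem_zmultiples _ _

lemma frontier_nonempty {V : Set T1} (hne : V.Nonempty) (hnu : V ≠ univ) :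
    (frontier V).Nonempty := by
  by_contra h
  rw [Set.not_nonempty_iff_eq_empty] at h
  rcases isClopen_iff.1 (isClopen_iff_frontier_eq_empty.2 h) with h1 | h1
  · exact hne.ne_empty h1
  · exact hnu h1

lemma arc_lemma {J : Set T1} (hJo : IsOpen J) (hJc : IsPreconnected J) (hJne : J.Nonempty)
    (hJuniv : J ≠ univ) :
    ∃ a b : ℝ, a < b ∧ b - a ≤ 1 ∧ J = (fun t : ℝ => (t : T1)) '' Set.Ioo a b ∧
      frontier J ⊆ {((a : ℝ) : T1), ((b : ℝ) : T1)} := by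
  obtain ⟨w, hw⟩ : ∃ w : T1, w ∉ J := by
    by_contra h
    push_neg at h
    exact hJuniv (eq_univ_of_forall h)
  set z₀ : ℝ := w.out with hz₀
  have hπz₀ : ((z₀ : ℝ) : T1) = w := QuotientAddGroup.out_eq' w
  set Jr : Set ℝ := (fun t : ℝ => (t : T1)) ⁻¹' J ∩ Set.Ioo z₀ (z₀+1) with hJr
  -- image
  have himg : (fun t : ℝ => (t : T1)) '' Jr = J := by
    apply Set.Subset.antisymm
    · rintro _ ⟨t, ht, rfl⟩; exact ht.1
    · intro y hy
      obtain ⟨t, htIco, hty⟩ := pi_rep z₀ y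
      have htne : t ≠ z₀ := by
        rintro rfl
        rw [hty] at hπz₀; exact hw (hπz₀ ▸ hy)
      exact ⟨t, ⟨by simpa [hty] using hy, lt_of_le_of_ne htIco.1 (Ne.symm htne), htIco.2⟩, hty⟩
  have hJrsub : Jr ⊆ Set.Ioo z₀ (z₀+1) := Set.inter_subset_right
  -- order connectedness
  have hord : ∀ u ∈ Jr, ∀ v ∈ Jr, ∀ t, u < t → t < v → t ∈ Jr := by
    intro u hu v hv t hut htv
    have htIoo : t ∈ Set.Ioo z₀ (z₀+1) :=
      ⟨lt_trans (hJrsub hu).1 hut, lt_trans htv (hJrsub hv).2⟩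
    refine ⟨?_, htIoo⟩
    by_contra htJ
    set A : Set T1 := (fun s : ℝ => (s : T1)) '' Set.Ioo z₀ t with hA
    set B : Set T1 := (fun s : ℝ => (s : T1)) '' Set.Ioo t (z₀+1) with hB
    have hAo : IsOpen A := pi_open _ isOpen_Ioo
    have hBo : IsOpen B := pi_open _ isOpen_Ioo
    have hcover : J ⊆ A ∪ B := by
      intro y hy
      obtain ⟨s, hs, rfl⟩ : y ∈ (fun t : ℝ => (t : T1)) '' Jr := himg ▸ hy
      have hst : s ≠ t := by rintro rfl; exact htJ hs.1
      rcases lt_or_gt_of_ne hst with h | h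
      · exact Or.inl ⟨s, ⟨(hJrsub hs).1, h⟩, rfl⟩
      · exact Or.inr ⟨s, ⟨h, (hJrsub hs).2⟩, rfl⟩
    have hJA : (J ∩ A).Nonempty :=
      ⟨(u : T1), himg ▸ Set.mem_image_of_mem _ hu, ⟨u, ⟨(hJrsub hu).1, hut⟩, rfl⟩⟩
    have hJB : (J ∩ B).Nonempty :=
      ⟨(v : T1), himg ▸ Set.mem_image_of_mem _ hv, ⟨v, ⟨htv, (hJrsub hv).2⟩, rfl⟩⟩
    obtain ⟨y, _, hyA, hyB⟩ := hJc A B hAo hBo hcover hJA hJB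
    obtain ⟨s₁, hs₁, h1⟩ := hyA
    obtain ⟨s₂, hs₂, h2⟩ := hyB
    have : s₁ = s₂ := pi_injOn_Ioo z₀ ⟨hs₁.1, lt_trans hs₁.2 htIoo.2⟩
      ⟨lt_trans htIoo.1 hs₂.1, hs₂.2⟩ (h1.trans h2.symm)
    exact absurd (this ▸ hs₁.2) (not_lt.2 (le_of_lt hs₂.1))
  -- Jr is nonempty open
  have hJrne : Jr.Nonempty := by
    obtain ⟨y, hy⟩ := hJne
    obtain ⟨t, ht, rfl⟩ : y ∈ (fun t : ℝ => (t : T1)) '' Jr := himg ▸ hy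
    exact ⟨t, ht⟩
  have hJro : IsOpen Jr := (hJo.preimage pi_continuous).inter isOpen_Ioo
  have hbdd : Bornology.IsBounded Jr := (Metric.isBounded_Ioo _ _).subset hJrsub
  set a : ℝ := sInf Jr with ha
  set b : ℝ := sSup Jr with hb
  have hbddB : BddBelow Jr := hbdd.bddBelow
  have hbddA : BddAbove Jr := hbdd.bddAbove
  have hanm : a ∉ Jr := by
    intro haJ
    obtain ⟨ε, hε, hball⟩ := Metric.isOpen_iff.1 hJro a haJ
    have : a - ε/2 ∈ Jr := hball (by simp [Real.dist_eq, abs_of_nonneg, hε.le]; linarith)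
    have := csInf_le hbddB this
    linarith
  have hbnm : b ∉ Jr := by
    intro hbJ
    obtain ⟨ε, hε, hball⟩ := Metric.isOpen_iff.1 hJro b hbJ
    have : b + ε/2 ∈ Jr := hball (by simp [Real.dist_eq, abs_of_nonneg, hε.le]; linarith)
    have := le_csSup hbddA this
    linarith
  have hIoo : Jr = Set.Ioo a b := by
    ext t
    constructor
    · intro ht
      exact ⟨lt_of_le_of_ne (csInf_le hbddB ht) (by rintro rfl; exact hanm ht),
        lt_of_le_of_ne (le_csSup hbddA ht) (by rintro rfl; exact hbnm ht)⟩
    · rintro ⟨h1, h2⟩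
      obtain ⟨u, hu, hu2⟩ := exists_lt_of_csInf_lt hJrne h1
      obtain ⟨v, hv, hv2⟩ := exists_lt_of_lt_csSup hJrne h2
      exact hord u hu v hv t hu2 hv2
  have hab : a < b := by
    obtain ⟨t, ht⟩ := hJrne
    rw [hIoo] at ht
    exact lt_trans ht.1 ht.2
  have haz : z₀ ≤ a := le_csInf hJrne (fun t ht => (hJrsub ht).1.le)
  have hbz : b ≤ z₀ + 1 := csSup_le hJrne (fun t ht => (hJrsub ht).2.le)
  refine ⟨a, b, hab, by linarith, by rw [← himg, hIoo], ?_⟩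
  -- frontier
  have hclos : closure J ⊆ (fun t : ℝ => (t : T1)) '' Set.Icc a b := by
    apply closure_minimal
    · rw [← himg, hIoo]; exact Set.image_mono Set.Ioo_subset_Icc_self
    · exact (isCompact_Icc.image pi_continuous).isClosed
  intro x hx
  have hxJ : x ∉ J := by
    rw [hJo.frontier_eq] at hx; exact hx.2
  obtain ⟨t, ht, rfl⟩ := hclos hx.1
  simp only [Set.mem_insert_iff, Set.mem_singleton_iff]
  rcases eq_or_lt_of_le ht.1 with h1 | h1
  · exact Or.inl (by rw [← h1])
  rcases eq_or_lt_of_le ht.2 with h2 | h2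
  · exact Or.inr (by rw [h2])
  exact absurd (by rw [← himg, hIoo]; exact Set.mem_image_of_mem _ ⟨h1, h2⟩) hxJ

end S0
section CantorPart
open scoped Classical

/-- Splitting point predicate. -/
def splitPred (C Q : Set ℝ) (m : ℝ) : Prop :=
  m ∉ C ∧ sInf Q < m ∧ m < sSup Q ∧ m - sInf Q ≤ 3/4*(sSup Q - sInf Q) ∧
    sSup Q - m ≤ 3/4*(sSup Q - sInf Q)

def splitPt (C Q : Set ℝ) : ℝ := if h : ∃ m, splitPred C Q m then h.choose else 0

lemma splitPt_spec {C Q : Set ℝ} (h : ∃ m, splitPred C Q m) : splitPred C Q (splitPt C Q) := by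
  rw [splitPt, dif_pos h]; exact h.choose_spec

def cStep (C Q : Set ℝ) (b : Bool) : Set ℝ :=
  if b then Q ∩ Set.Ioi (splitPt C Q) else Q ∩ Set.Iio (splitPt C Q)

def cPiece (C : Set ℝ) (x : ℕ → Bool) : ℕ → Set ℝ
  | 0 => C
  | n+1 => cStep C (cPiece C x n) (x n)

def CGood (C Q : Set ℝ) : Prop := Q.Nonempty ∧ IsClosed Q ∧ Preperfect Q ∧ Q ⊆ C

lemma cStep_subset (C Q : Set ℝ) (b : Bool) : cStep C Q b ⊆ Q := by
  cases b <;> simp [cStep] <;> exact Set.inter_subset_left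

lemma cGood_two_pts {C Q : Set ℝ} (hcomp : IsCompact C) (hg : CGood C Q) :
    sInf Q < sSup Q := by
  obtain ⟨hne, hcl, hpp, hsub⟩ := hg
  have hQc : IsCompact Q := hcomp.of_isClosed_subset hcl hsub
  have hperf : Perfect Q := ⟨hcl, hpp⟩
  obtain ⟨C₀, C₁, ⟨_, h0ne, h0s⟩, ⟨_, h1ne, h1s⟩, hdisj⟩ := hperf.splitting hne
  obtain ⟨p, hp⟩ := h0ne
  obtain ⟨q, hq⟩ := h1ne
  have hpq : p ≠ q := fun h => (Set.disjoint_left.1 hdisj hp) (h ▸ hq)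
  have h1 : sInf Q ≤ p := csInf_le hQc.bddBelow (h0s hp)
  have h2 : q ≤ sSup Q := le_csSup hQc.bddAbove (h1s hq)
  have h3 : sInf Q ≤ q := csInf_le hQc.bddBelow (h1s hq)
  have h4 : p ≤ sSup Q := le_csSup hQc.bddAbove (h0s hp)
  rcases lt_or_gt_of_ne hpq with h | h
  · exact lt_of_le_of_lt h1 (lt_of_lt_of_le h h2)
  · exact lt_of_le_of_lt h3 (lt_of_lt_of_le h h4)

lemma splitPred_exists {C Q : Set ℝ} (hint : interior C = ∅) (hcomp : IsCompact C)
    (hg : CGood C Q) : ∃ m, splitPred C Q m := by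
  have h2 := cGood_two_pts hcomp hg
  set a := sInf Q
  set b := sSup Q
  have hd : 0 < b - a := by linarith
  have : ¬ (Set.Ioo ((a+b)/2 - (b-a)/4) ((a+b)/2 + (b-a)/4) ⊆ C) := by
    intro hsub
    have : Set.Ioo ((a+b)/2 - (b-a)/4) ((a+b)/2 + (b-a)/4) ⊆ interior C :=
      interior_maximal hsub isOpen_Ioo
    rw [hint, Set.subset_empty_iff, Set.Ioo_eq_empty_iff] at this
    apply this; linarith
  obtain ⟨m, hm1, hm2⟩ := Set.not_subset.1 this
  obtain ⟨hml, hmr⟩ := hm1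
  exact ⟨m, hm2, by linarith, by linarith, by linarith, by linarith⟩

lemma cStep_good {C Q : Set ℝ} (hint : interior C = ∅) (hcomp : IsCompact C)
    (hg : CGood C Q) (b : Bool) :
    CGood C (cStep C Q b) ∧ Metric.diam (cStep C Q b) ≤ 3/4 * Metric.diam Q := by
  obtain ⟨hne, hcl, hpp, hsub⟩ := hg
  have hQc : IsCompact Q := hcomp.of_isClosed_subset hcl hsub
  obtain ⟨hmC, hm1, hm2, hm3, hm4⟩ := splitPt_spec (splitPred_exists hint hcomp ⟨hne, hcl, hpp, hsub⟩)
  set m := splitPt C Q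
  have hmQ : m ∉ Q := fun h => hmC (hsub h)
  have hIa : sInf Q ∈ Q := hQc.sInf_mem hne
  have hIb : sSup Q ∈ Q := hQc.sSup_mem hne
  have hdiam : sSup Q - sInf Q ≤ Metric.diam Q := by
    have := Metric.dist_le_diam_of_mem hQc.isBounded hIb hIa
    rw [Real.dist_eq] at this
    exact le_trans (le_abs_self _) this
  cases b
  · -- false : left piece
    have heq : Q ∩ Set.Iio m = Q ∩ Set.Iic m := by
      ext t
      simp only [Set.mem_inter_iff, Set.mem_Iio, Set.mem_Iic]
      exact ⟨fun ⟨h1, h2⟩ => ⟨h1, h2.le⟩,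
        fun ⟨h1, h2⟩ => ⟨h1, lt_of_le_of_ne h2 (fun h => hmQ (h ▸ h1))⟩⟩
    have hsubIcc : Q ∩ Set.Iio m ⊆ Set.Icc (sInf Q) m := fun t ht =>
      ⟨csInf_le hQc.bddBelow ht.1, ht.2.le⟩
    refine ⟨⟨⟨sInf Q, hIa, hm1⟩, by rw [show cStep C Q false = Q ∩ Set.Iic m from heq ▸ rfl]; exact hcl.inter isClosed_Iic, ?_, fun t ht => hsub (cStep_subset C Q false ht)⟩, ?_⟩
    · show Preperfect (Q ∩ Set.Iio m)
      rw [Set.inter_comm]; exact hpp.open_inter isOpen_Iio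
    · show Metric.diam (Q ∩ Set.Iio m) ≤ 3/4 * Metric.diam Q
      calc Metric.diam (Q ∩ Set.Iio m) ≤ Metric.diam (Set.Icc (sInf Q) m) :=
            Metric.diam_mono hsubIcc (Metric.isBounded_Icc _ _)
        _ = m - sInf Q := Real.diam_Icc hm1.le
        _ ≤ 3/4 * (sSup Q - sInf Q) := hm3
        _ ≤ 3/4 * Metric.diam Q := by linarith
  · -- true : right piece
    have heq : Q ∩ Set.Ioi m = Q ∩ Set.Ici m := by
      ext t
      simp only [Set.mem_inter_iff, Set.mem_Ioi, Set.mem_Ici]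
      exact ⟨fun ⟨h1, h2⟩ => ⟨h1, h2.le⟩,
        fun ⟨h1, h2⟩ => ⟨h1, lt_of_le_of_ne h2 (fun h => hmQ (h.symm ▸ h1))⟩⟩
    have hsubIcc : Q ∩ Set.Ioi m ⊆ Set.Icc m (sSup Q) := fun t ht =>
      ⟨ht.2.le, le_csSup hQc.bddAbove ht.1⟩
    refine ⟨⟨⟨sSup Q, hIb, hm2⟩, by rw [show cStep C Q true = Q ∩ Set.Ici m from heq ▸ rfl]; exact hcl.inter isClosed_Ici, ?_, fun t ht => hsub (cStep_subset C Q true ht)⟩, ?_⟩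
    · show Preperfect (Q ∩ Set.Ioi m)
      rw [Set.inter_comm]; exact hpp.open_inter isOpen_Ioi
    · show Metric.diam (Q ∩ Set.Ioi m) ≤ 3/4 * Metric.diam Q
      calc Metric.diam (Q ∩ Set.Ioi m) ≤ Metric.diam (Set.Icc m (sSup Q)) :=
            Metric.diam_mono hsubIcc (Metric.isBounded_Icc _ _)
        _ = sSup Q - m := Real.diam_Icc hm2.le
        _ ≤ 3/4 * (sSup Q - sInf Q) := hm4
        _ ≤ 3/4 * Metric.diam Q := by linarith

lemma cStep_union {C Q : Set ℝ} (hint : interior C = ∅) (hcomp : IsCompact C) (hg : CGood C Q) :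
    Q = cStep C Q false ∪ cStep C Q true := by
  obtain ⟨hmC, _, _, _, _⟩ := splitPt_spec (splitPred_exists hint hcomp hg)
  ext t
  simp only [cStep, if_true, if_false, Set.mem_union, Set.mem_inter_iff, Set.mem_Iio, Set.mem_Ioi]
  constructor
  · intro ht
    rcases lt_trichotomy t (splitPt C Q) with h | h | h
    · exact Or.inl ⟨ht, h⟩
    · exact absurd (hg.2.2.2 ht) (h ▸ hmC)
    · exact Or.inr ⟨ht, h⟩
  · rintro (⟨h, _⟩ | ⟨h, _⟩) <;> exact h

lemma cPiece_good {C : Set ℝ} (hint : interior C = ∅) (hcomp : IsCompact C)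
    (hgood : CGood C C) (x : ℕ → Bool) (n : ℕ) :
    CGood C (cPiece C x n) ∧ Metric.diam (cPiece C x n) ≤ (3/4)^n * Metric.diam C := by
  induction n with
  | zero => exact ⟨hgood, by simp [cPiece]⟩
  | succ n ih =>
    obtain ⟨hg, hd⟩ := ih
    obtain ⟨hg', hd'⟩ := cStep_good hint hcomp hg (x n)
    refine ⟨hg', ?_⟩
    calc Metric.diam (cPiece C x (n+1)) ≤ 3/4 * Metric.diam (cPiece C x n) := hd'
      _ ≤ 3/4 * ((3/4)^n * Metric.diam C) := by
          have h34 : (0:ℝ) ≤ 3/4 := by norm_num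
          exact mul_le_mul_of_nonneg_left hd h34
      _ = (3/4)^(n+1) * Metric.diam C := by ring

lemma cPiece_agree {C : Set ℝ} {x y : ℕ → Bool} (n : ℕ) (h : ∀ i < n, x i = y i) :
    cPiece C x n = cPiece C y n := by
  induction n with
  | zero => rfl
  | succ n ih =>
    have h1 : cPiece C x n = cPiece C y n := ih (fun i hi => h i (Nat.lt_succ_of_lt hi))
    show cStep C (cPiece C x n) (x n) = cStep C (cPiece C y n) (y n)
    rw [h1, h n (Nat.lt_succ_self n)]

end CantorPart
section CantorMain
open scoped Classical

lemma cantorR {C : Set ℝ} (hne : C.Nonempty) (hcomp : IsCompact C)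
    (hperf : Preperfect C) (hint : interior C = ∅) :
    Nonempty (C ≃ₜ (ℕ → Bool)) := by
  have hgood : CGood C C := ⟨hne, hcomp.isClosed, hperf, Set.Subset.rfl⟩
  have hpg := fun (x : ℕ → Bool) (n : ℕ) => cPiece_good hint hcomp hgood x n
  have hnested : ∀ (x : ℕ → Bool) (n : ℕ), cPiece C x (n+1) ⊆ cPiece C x n :=
    fun x n => cStep_subset _ _ _
  have hclosed : ∀ (x : ℕ → Bool) (n : ℕ), IsClosed (cPiece C x n) :=
    fun x n => (hpg x n).1.2.1
  have hsubC : ∀ (x : ℕ → Bool) (n : ℕ), cPiece C x n ⊆ C := fun x n => (hpg x n).1.2.2.2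
  have hnonempty : ∀ (x : ℕ → Bool) (n : ℕ), (cPiece C x n).Nonempty := fun x n => (hpg x n).1.1
  have hkey : ∀ x : ℕ → Bool, (⋂ n, cPiece C x n).Nonempty := fun x =>
    IsCompact.nonempty_iInter_of_sequence_nonempty_isCompact_isClosed _ (hnested x)
      (hnonempty x) (by simpa [cPiece] using hcomp) (hclosed x)
  set φ : (ℕ → Bool) → ℝ := fun x => (hkey x).choose with hφdef
  have hφ : ∀ (x : ℕ → Bool) (n : ℕ), φ x ∈ cPiece C x n := by
    intro x n
    have := (hkey x).choose_spec
    rw [Set.mem_iInter] at this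
    exact this n
  have hφC : ∀ x, φ x ∈ C := fun x => hφ x 0
  -- distance bound
  have hdistb : ∀ (x y : ℕ → Bool) (n : ℕ), (∀ i < n, x i = y i) →
      dist (φ x) (φ y) ≤ (3/4)^n * Metric.diam C := by
    intro x y n h
    have h1 : φ y ∈ cPiece C x n := by rw [cPiece_agree n h]; exact hφ y n
    have hbdd : Bornology.IsBounded (cPiece C x n) :=
      (hcomp.of_isClosed_subset (hclosed x n) (hsubC x n)).isBounded
    exact le_trans (Metric.dist_le_diam_of_mem hbdd (hφ x n) h1) (hpg x n).2
  -- injectivity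
  have hinj : Function.Injective φ := by
    intro x y hxy
    by_contra hne'
    have hex : ∃ i, x i ≠ y i := by
      by_contra h; push_neg at h; exact hne' (funext h)
    set n := Nat.find hex with hn
    have hmin : ∀ i < n, x i = y i := fun i hi => not_not.1 (Nat.find_min hex hi)
    have hQ : cPiece C x n = cPiece C y n := cPiece_agree n hmin
    have hx1 : φ x ∈ cStep C (cPiece C x n) (x n) := hφ x (n+1)
    have hy1 : φ y ∈ cStep C (cPiece C x n) (y n) := by rw [hQ]; exact hφ y (n+1)
    have hbool : x n ≠ y n := Nat.find_spec hex
    rw [hxy] at hx1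
    rcases Bool.eq_false_or_eq_true (x n) with h | h <;>
      rcases Bool.eq_false_or_eq_true (y n) with h' | h' <;>
      first
        | (exact hbool (h.trans h'.symm))
        | (rw [h] at hx1; rw [h'] at hy1;
           simp only [cStep, if_true, if_false, Set.mem_inter_iff, Set.mem_Ioi, Set.mem_Iio] at hx1 hy1;
           exact absurd (lt_trans hx1.2 hy1.2) (lt_irrefl _))
        | (rw [h] at hx1; rw [h'] at hy1;
           simp only [cStep, if_true, if_false, Set.mem_inter_iff, Set.mem_Ioi, Set.mem_Iio] at hx1 hy1;
           exact absurd (lt_trans hy1.2 hx1.2) (lt_irrefl _))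
  -- surjectivity
  have hsurj : ∀ c ∈ C, ∃ x, φ x = c := by
    intro c hc
    set u : ℕ → Set ℝ := fun n => Nat.rec C
      (fun _ Q => cStep C Q (if c ∈ cStep C Q false then false else true)) n with hu
    set x : ℕ → Bool := fun n => if c ∈ cStep C (u n) false then false else true with hx
    have hustep : ∀ n, u (n+1) = cStep C (u n) (x n) := fun n => rfl
    have hmemgood : ∀ n, CGood C (u n) ∧ c ∈ u n := by
      intro n
      induction n with
      | zero => exact ⟨hgood, hc⟩
      | succ n ih =>
        obtain ⟨hg, hm⟩ := ih
        refine ⟨by rw [hustep n]; exact (cStep_good hint hcomp hg (x n)).1, ?_⟩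
        rw [hustep n, hx]
        by_cases hcf : c ∈ cStep C (u n) false
        · simpa [hcf] using hcf
        · have := cStep_union hint hcomp hg
          rw [this] at hm
          rcases hm with h | h
          · exact absurd h hcf
          · simpa [hcf] using h
    have hupiece : ∀ n, cPiece C x n = u n := by
      intro n
      induction n with
      | zero => rfl
      | succ n ih => show cStep C (cPiece C x n) (x n) = u (n+1); rw [ih, hustep n]
    refine ⟨x, ?_⟩
    have hb : ∀ n, dist (φ x) c ≤ (3/4)^n * Metric.diam C := by
      intro n
      have h1 : c ∈ cPiece C x n := by rw [hupiece n]; exact (hmemgood n).2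
      have hbdd : Bornology.IsBounded (cPiece C x n) :=
        (hcomp.of_isClosed_subset (hclosed x n) (hsubC x n)).isBounded
      exact le_trans (Metric.dist_le_diam_of_mem hbdd (hφ x n) h1) (hpg x n).2
    have htend : Filter.Tendsto (fun n : ℕ => (3/4:ℝ)^n * Metric.diam C) Filter.atTop (nhds 0) := by
      have := tendsto_pow_atTop_nhds_zero_of_lt_one (by norm_num : (0:ℝ) ≤ 3/4) (by norm_num)
      simpa using this.mul_const (Metric.diam C)
    have : dist (φ x) c ≤ 0 := ge_of_tendsto htend (Filter.Eventually.of_forall hb)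
    have := le_antisymm this dist_nonneg
    exact dist_eq_zero.1 this
  -- continuity
  have hcont : Continuous φ := by
    rw [continuous_iff_continuousAt]
    intro x
    rw [ContinuousAt, Metric.tendsto_nhds]
    intro ε hε
    have htend : Filter.Tendsto (fun n : ℕ => (3/4:ℝ)^n * Metric.diam C) Filter.atTop (nhds 0) := by
      have := tendsto_pow_atTop_nhds_zero_of_lt_one (by norm_num : (0:ℝ) ≤ 3/4) (by norm_num)
      simpa using this.mul_const (Metric.diam C)
    obtain ⟨n, hn⟩ := (htend.eventually (eventually_lt_nhds hε)).exists
    have hVopen : IsOpen {y : ℕ → Bool | ∀ i < n, y i = x i} := by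
      have : {y : ℕ → Bool | ∀ i < n, y i = x i} =
          ⋂ i ∈ Finset.range n, (fun y : ℕ → Bool => y i) ⁻¹' {x i} := by
        ext y; simp only [Set.mem_setOf_eq, Set.mem_iInter, Finset.mem_range, Set.mem_preimage, Set.mem_singleton_iff]
      rw [this]
      exact isOpen_biInter_finset (fun i _ => (continuous_apply i).isOpen_preimage _ (isOpen_discrete _))
    have hVmem : {y : ℕ → Bool | ∀ i < n, y i = x i} ∈ nhds x :=
      hVopen.mem_nhds (fun i _ => rfl)
    filter_upwards [hVmem] with y hy
    calc dist (φ y) (φ x) ≤ (3/4)^n * Metric.diam C := hdistb y x n hy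
      _ < ε := hn
  -- assemble
  have hbij : Function.Bijective (fun x : ℕ → Bool => (⟨φ x, hφC x⟩ : C)) := by
    constructor
    · intro x y h
      exact hinj (congrArg Subtype.val h)
    · rintro ⟨c, hc⟩
      obtain ⟨x, hx⟩ := hsurj c hc
      exact ⟨x, Subtype.ext hx⟩
  have hcont2 : Continuous (fun x : ℕ → Bool => (⟨φ x, hφC x⟩ : C)) :=
    hcont.subtype_mk _
  exact ⟨(@Continuous.homeoOfEquivCompactToT2 _ _ _ _ _ _ (Equiv.ofBijective _ hbij) hcont2).symm⟩

end CantorMain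
section Dyn

variable {G : Type*} [Group G] [MulAction G T1]

/-- The homeomorphism of the circle induced by the action of `g`. -/
def actHomeo (hc : ∀ g : G, Continuous fun x : T1 => g • x) (g : G) : T1 ≃ₜ T1 where
  toFun := fun x => g • x
  invFun := fun x => g⁻¹ • x
  left_inv := fun x => inv_smul_smul g x
  right_inv := fun x => smul_inv_smul g x
  continuous_toFun := hc g
  continuous_invFun := hc g⁻¹

lemma invariant_image {S : Set T1} (hS : InvariantSet G S) (g : G) :
    (fun x : T1 => g • x) '' S = S := by
  apply Set.Subset.antisymm
  · rintro _ ⟨x, hx, rfl⟩; exact hS g x hx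
  · intro x hx
    exact ⟨g⁻¹ • x, hS g⁻¹ x hx, smul_inv_smul g x⟩

lemma invariant_frontier (hc : ∀ g : G, Continuous fun x : T1 => g • x) {S : Set T1}
    (hS : InvariantSet G S) : InvariantSet G (frontier S) := by
  intro g x hx
  have h1 : (fun x : T1 => g • x) '' frontier S = frontier ((fun x : T1 => g • x) '' S) :=
    (actHomeo hc g).image_frontier S
  rw [invariant_image hS g] at h1
  rw [← h1]
  exact Set.mem_image_of_mem _ hx

lemma invariant_derivedSet (hc : ∀ g : G, Continuous fun x : T1 => g • x) {S : Set T1}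
    (hS : InvariantSet G S) : InvariantSet G (derivedSet S) := by
  intro g x hx
  rw [mem_derivedSet, accPt_iff_nhds] at hx ⊢
  intro U hU
  have hU' : (fun y : T1 => g • y) ⁻¹' U ∈ nhds x := by
    apply (hc g).continuousAt.preimage_mem_nhds
    simpa using hU
  obtain ⟨y, ⟨hy1, hy2⟩, hy3⟩ := hx _ hU'
  exact ⟨g • y, ⟨hy1, hS g y hy2⟩, fun h => hy3 (smul_left_cancel g h)⟩

lemma orbit_invariant (x : T1) : InvariantSet G (MulAction.orbit G x) := by
  intro g y hy
  obtain ⟨h, rfl⟩ := hy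
  exact ⟨g * h, (smul_smul g h x).symm⟩

lemma exists_minimal_sub {S : Set T1} (hSne : S.Nonempty) (hScl : IsClosed S)
    (hSinv : InvariantSet G S) : ∃ K, K ⊆ S ∧ IsMinimalSet G K := by
  set 𝒮 : Set (Set T1) := {Z | Z.Nonempty ∧ IsClosed Z ∧ InvariantSet G Z} with h𝒮
  have hzorn := zorn_superset_nonempty 𝒮 ?_ S ⟨hSne, hScl, hSinv⟩
  · obtain ⟨m, hmS, hmin⟩ := hzorn
    refine ⟨m, hmS, hmin.prop.1, hmin.prop.2.1, hmin.prop.2.2, ?_⟩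
    intro Z hZne hZcl hZinv hZsub
    exact Set.Subset.antisymm hZsub (hmin.2 ⟨hZne, hZcl, hZinv⟩ hZsub)
  · intro c hc hchain hcne
    haveI : Nonempty c := hcne.to_subtype
    have hdir : Directed (· ⊇ ·) (fun i : c => (i : Set T1)) := by
      intro i j
      rcases hchain.total i.2 j.2 with h | h
      · exact ⟨i, Set.Subset.rfl, h⟩
      · exact ⟨j, h, Set.Subset.rfl⟩
    have hnei : (⋂ i : c, (i : Set T1)).Nonempty := by
      apply IsCompact.nonempty_iInter_of_directed_nonempty_isCompact_isClosed _ hdir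
      · exact fun i => (hc i.2).1
      · exact fun i => (hc i.2).2.1.isCompact
      · exact fun i => (hc i.2).2.1
    refine ⟨⋂ i : c, (i : Set T1), ⟨hnei, isClosed_iInter (fun i => (hc i.2).2.1), ?_⟩, ?_⟩
    · intro g x hx
      rw [Set.mem_iInter] at hx ⊢
      exact fun i => (hc i.2).2.2 g _ (hx i)
    · intro s hs
      exact Set.iInter_subset_of_subset ⟨s, hs⟩ Set.Subset.rfl

lemma minimal_eq_of_inter {K N : Set T1} (hK : IsMinimalSet G K) (hN : IsMinimalSet G N)
    (hi : (K ∩ N).Nonempty) : K = N := by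
  have hinv : InvariantSet G (K ∩ N) := fun g x hx => ⟨hK.2.2.1 g x hx.1, hN.2.2.1 g x hx.2⟩
  have hcl : IsClosed (K ∩ N) := hK.2.1.inter hN.2.1
  have h1 := hK.2.2.2 _ hi hcl hinv Set.inter_subset_left
  have h2 := hN.2.2.2 _ hi hcl hinv Set.inter_subset_right
  exact h1.symm.trans h2

lemma minimal_infinite (hnofin : ¬ ∃ x : T1, (MulAction.orbit G x).Finite) {K : Set T1}
    (hK : IsMinimalSet G K) : K.Infinite := by
  obtain ⟨x, hx⟩ := hK.1
  intro hfin
  apply hnofin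
  refine ⟨x, hfin.subset ?_⟩
  rintro _ ⟨g, rfl⟩
  exact hK.2.2.1 g x hx

lemma minimal_perfect (hc : ∀ g : G, Continuous fun x : T1 => g • x)
    (hnofin : ¬ ∃ x : T1, (MulAction.orbit G x).Finite) {K : Set T1}
    (hK : IsMinimalSet G K) : Preperfect K := by
  have hKcl := hK.2.1
  have hKcpt : IsCompact K := hKcl.isCompact
  have hinf := minimal_infinite hnofin hK
  obtain ⟨p, hpK, hpacc⟩ := hinf.exists_accPt_of_subset_isCompact hKcpt Set.Subset.rfl
  have hDne : (K ∩ derivedSet K).Nonempty := ⟨p, hpK, mem_derivedSet.2 hpacc⟩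
  have hDcl : IsClosed (K ∩ derivedSet K) := hKcl.inter (isClosed_derivedSet K)
  have hDinv : InvariantSet G (K ∩ derivedSet K) := fun g x hx =>
    ⟨hK.2.2.1 g x hx.1, invariant_derivedSet hc (hK.2.2.1) g x hx.2⟩
  have hD := hK.2.2.2 _ hDne hDcl hDinv Set.inter_subset_left
  intro x hx
  rw [← hD] at hx
  exact mem_derivedSet.1 hx.2

lemma minimal_interior_empty (hc : ∀ g : G, Continuous fun x : T1 => g • x)
    {K : Set T1} (hK : IsMinimalSet G K) (hKuniv : K ≠ Set.univ) : interior K = ∅ := by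
  have hfr : (frontier K).Nonempty := by
    apply S0.frontier_nonempty hK.1 hKuniv
  have hsub : frontier K ⊆ K := by
    intro t ht
    have := frontier_subset_closure (s := K) ht
    rwa [hK.2.1.closure_eq] at this
  have heq := hK.2.2.2 _ hfr isClosed_frontier (invariant_frontier hc hK.2.2.1) hsub
  rw [Set.eq_empty_iff_forall_notMem]
  intro t ht
  have htK : t ∈ K := interior_subset ht
  rw [← heq, hK.2.1.frontier_eq] at htK
  exact htK.2 ht

end Dyn
section Main

variable {G : Type*} [Group G] [MulAction G T1]

lemma invariant_compl {S : Set T1} (hS : InvariantSet G S) : InvariantSet G Sᶜ := by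
  intro g x hx hgx
  exact hx (by simpa using hS g⁻¹ _ hgx)

/-- Frontier of a union of connected components of `Kᶜ` lies in `K`. -/
lemma frontier_subset_of_comp {K W : Set T1} (hKcl : IsClosed K) (hWo : IsOpen W)
    (hcomp : ∀ s ∈ W, connectedComponentIn Kᶜ s ⊆ W) : frontier W ⊆ K := by
  intro t ht
  by_contra htK
  have htW : t ∉ W := by rw [hWo.frontier_eq] at ht; exact ht.2
  have htc : t ∈ Kᶜ := htK
  have hCopen : IsOpen (connectedComponentIn Kᶜ t) := hKcl.isOpen_compl.connectedComponentIn
  have hCnhds : connectedComponentIn Kᶜ t ∈ nhds t :=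
    hCopen.mem_nhds (mem_connectedComponentIn htc)
  have htcl : t ∈ closure W := ht.1
  rw [mem_closure_iff_nhds] at htcl
  obtain ⟨s, hsC, hsW⟩ := htcl _ hCnhds
  exact htW (hcomp s hsW ((connectedComponentIn_eq hsC) ▸ mem_connectedComponentIn htc))

lemma arc_measure {a b : ℝ} (hab : a < b) (hb1 : b - a ≤ 1) :
    ENNReal.ofReal (b - a) ≤ volume ((fun t : ℝ => (t : T1)) '' Set.Ioo a b) := by
  have hJo : IsOpen ((fun t : ℝ => (t : T1)) '' Set.Ioo a b) := S0.pi_open _ isOpen_Ioo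
  have hmp := AddCircle.measurePreserving_mk 1 a
  have hmeas : MeasurableSet ((fun t : ℝ => (t : T1)) '' Set.Ioo a b) := hJo.measurableSet
  have h1 := hmp.measure_preimage hmeas.nullMeasurableSet
  have h2 : Set.Ioo a b ⊆ (fun t : ℝ => (t : T1)) ⁻¹' ((fun t : ℝ => (t : T1)) '' Set.Ioo a b) :=
    Set.subset_preimage_image _ _
  calc ENNReal.ofReal (b - a) = volume (Set.Ioo a b) := (Real.volume_Ioo).symm
    _ ≤ (volume.restrict (Set.Ioc a (a+1))) ((fun t : ℝ => (t : T1)) ⁻¹' ((fun t : ℝ => (t : T1)) '' Set.Ioo a b)) := by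
        rw [MeasureTheory.Measure.restrict_apply']
        · apply measure_mono
          intro t ht
          exact ⟨h2 ht, ht.1, by linarith [ht.2.le]⟩
        · exact measurableSet_Ioc
    _ = volume ((fun t : ℝ => (t : T1)) '' Set.Ioo a b) := h1

lemma minimal_unique (hc : ∀ g : G, Continuous fun x : T1 => g • x)
    (hnofin : ¬ ∃ x : T1, (MulAction.orbit G x).Finite)
    {K N : Set T1} (hK : IsMinimalSet G K) (hKuniv : K ≠ Set.univ)
    (hN : IsMinimalSet G N) : N = K := by
  by_cases hi : (K ∩ N).Nonempty
  · exact (minimal_eq_of_inter hK hN hi).symm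
  exfalso
  have hdisj : ∀ x ∈ N, x ∉ K := fun x hx hxK => hi ⟨x, hxK, hx⟩
  obtain ⟨y, hyN⟩ := hN.1
  have hyKc : y ∈ Kᶜ := hdisj y hyN
  have hKcl := hK.2.1
  have hKo : IsOpen Kᶜ := hKcl.isOpen_compl
  have hKne := hK.1
  have hKinf := minimal_infinite hnofin hK
  set I : Set T1 := connectedComponentIn Kᶜ y with hIdef
  set f : G → Set T1 := fun g => (fun x : T1 => g • x) '' I with hfdef
  have hKcinv : InvariantSet G Kᶜ := invariant_compl hK.2.2.1
  have hgy : ∀ g : G, g • y ∈ Kᶜ := fun g => hKcinv g y hyKc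
  have hcomp_is : ∀ g : G, f g = connectedComponentIn Kᶜ (g • y) := by
    intro g
    have h1 := (actHomeo hc g).image_connectedComponentIn (s := Kᶜ) hyKc
    have h2 : ⇑(actHomeo hc g) '' Kᶜ = Kᶜ := invariant_image hKcinv g
    rw [h2] at h1
    exact h1
  have hJo : ∀ g : G, IsOpen (f g) := fun g => hcomp_is g ▸ hKo.connectedComponentIn
  have hJconn : ∀ g : G, IsPreconnected (f g) := fun g =>
    hcomp_is g ▸ isPreconnected_connectedComponentIn
  have hJne : ∀ g : G, (f g).Nonempty := fun g =>
    ⟨g • y, hcomp_is g ▸ mem_connectedComponentIn (hgy g)⟩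
  have hJsub : ∀ g : G, f g ⊆ Kᶜ := fun g => hcomp_is g ▸ connectedComponentIn_subset _ _
  have hJuniv : ∀ g : G, f g ≠ Set.univ := by
    intro g h
    obtain ⟨k, hk⟩ := hKne
    exact (hJsub g) (h ▸ Set.mem_univ k) hk
  have hJfr : ∀ g : G, frontier (f g) ⊆ K := by
    intro g
    apply frontier_subset_of_comp hKcl (hJo g)
    intro s hs
    rw [hcomp_is g] at hs ⊢
    rw [← connectedComponentIn_eq hs]
  have hJeq_or_disj : ∀ g h : G, f g = f h ∨ f g ∩ f h = ∅ := by
    intro g h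
    by_cases hgh : (f g ∩ f h).Nonempty
    · left
      obtain ⟨s, hsg, hsh⟩ := hgh
      rw [hcomp_is g, hcomp_is h] at *
      rw [connectedComponentIn_eq hsg, connectedComponentIn_eq hsh]
    · right; exact Set.not_nonempty_iff_eq_empty.1 hgh
  by_cases hinf : (Set.range f).Infinite
  · -- infinitely many components: small components exist
    set emb := hinf.natEmbedding with hembdef
    have hJn : ∀ n : ℕ, ∃ g : G, f g = (emb n : Set T1) := fun n => (emb n).2
    choose gn hgn using hJn
    -- arc data
    have harc : ∀ n : ℕ, ∃ a b : ℝ, a < b ∧ b - a ≤ 1 ∧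
        (emb n : Set T1) = (fun t : ℝ => (t : T1)) '' Set.Ioo a b ∧
        frontier (emb n : Set T1) ⊆ {((a : ℝ) : T1), ((b : ℝ) : T1)} := by
      intro n
      rw [← hgn n]
      exact S0.arc_lemma (hJo _) (hJconn _) (hJne _) (hJuniv _)
    choose an bn hab hab1 himg hfr using harc
    -- a point of K close to everything in the component
    have hclose : ∀ n : ℕ, ∃ k ∈ K, ∀ p ∈ (emb n : Set T1), dist p k ≤ bn n - an n := by
      intro n
      have hfrne : (frontier (emb n : Set T1)).Nonempty := by
        apply S0.frontier_nonempty
        · rw [← hgn n]; exact hJne _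
        · rw [← hgn n]; exact hJuniv _
      obtain ⟨k, hk⟩ := hfrne
      have hkK : k ∈ K := by rw [← hgn n] at hk; exact hJfr _ hk
      refine ⟨k, hkK, ?_⟩
      intro p hp
      rw [himg n] at hp
      obtain ⟨t, htIoo, rfl⟩ := hp
      rcases hfr n hk with h | h
      · rw [h]
        calc dist ((t : ℝ) : T1) ((an n : ℝ) : T1) ≤ |t - an n| := S0.pi_dist_le _ _
          _ ≤ bn n - an n := by
              rw [abs_of_pos (by linarith [htIoo.1])]; linarith [htIoo.2]
      · rw [Set.mem_singleton_iff] at h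
        rw [h]
        calc dist ((t : ℝ) : T1) ((bn n : ℝ) : T1) ≤ |t - bn n| := S0.pi_dist_le _ _
          _ ≤ bn n - an n := by
              rw [abs_of_neg (by linarith [htIoo.2])]; linarith [htIoo.1]
    choose kn hknK hkn using hclose
    -- lengths get small
    have hsmall : ∀ ε : ℝ, 0 < ε → ∃ n, bn n - an n < ε := by
      intro ε hε
      by_contra hbig
      push_neg at hbig
      have hmeas : ∀ n, ENNReal.ofReal ε ≤ volume (emb n : Set T1) := by
        intro n
        calc ENNReal.ofReal ε ≤ ENNReal.ofReal (bn n - an n) := ENNReal.ofReal_le_ofReal (hbig n)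
          _ ≤ volume ((fun t : ℝ => (t : T1)) '' Set.Ioo (an n) (bn n)) :=
              arc_measure (hab n) (hab1 n)
          _ = volume (emb n : Set T1) := by rw [himg n]
      have hdisjn : Pairwise (Function.onFun Disjoint (fun n => (emb n : Set T1))) := by
        intro m n hmn
        have hne' : (emb m : Set T1) ≠ (emb n : Set T1) := by
          intro h
          exact hmn (emb.injective (Subtype.ext h))
        rw [Function.onFun, Set.disjoint_iff_inter_eq_empty]
        rcases hJeq_or_disj (gn m) (gn n) with h | h
        · rw [hgn m, hgn n] at h; exact absurd h hne'
        · rw [hgn m, hgn n] at h; exact h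
      have hmeasn : ∀ n : ℕ, MeasurableSet (emb n : Set T1) := by
        intro n; rw [← hgn n]; exact (hJo _).measurableSet
      have h1 : volume (⋃ n, (emb n : Set T1)) = ∑' n, volume (emb n : Set T1) :=
        measure_iUnion hdisjn hmeasn
      have h2 : (⊤ : ENNReal) ≤ volume (⋃ n, (emb n : Set T1)) := by
        rw [h1]
        calc (⊤ : ENNReal) = ∑' _ : ℕ, ENNReal.ofReal ε :=
              (ENNReal.tsum_const_eq_top_of_ne_zero (by simp [hε])).symm
          _ ≤ ∑' n, volume (emb n : Set T1) := ENNReal.tsum_le_tsum hmeas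
      have h3 : volume (⋃ n, (emb n : Set T1)) ≤ volume (Set.univ : Set T1) :=
        measure_mono (Set.subset_univ _)
      rw [AddCircle.measure_univ] at h3
      have := le_trans h2 h3
      simp at this
  -- points of N get close to K
    have hNC : ∀ m : ℕ, ∃ p ∈ N, Metric.infDist p K < 1/(m+1) := by
      intro m
      obtain ⟨n, hn⟩ := hsmall (1/(m+1)) (by positivity)
      refine ⟨gn n • y, hN.2.2.1 _ _ hyN, ?_⟩
      have hpJ : gn n • y ∈ (emb n : Set T1) := by
        rw [← hgn n]
        exact ⟨y, mem_connectedComponentIn hyKc, rfl⟩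
      calc Metric.infDist (gn n • y) K ≤ dist (gn n • y) (kn n) :=
            Metric.infDist_le_dist_of_mem (hknK n)
        _ ≤ bn n - an n := hkn n _ hpJ
        _ < 1/(m+1) := hn
    choose pseq hpN hpd using hNC
    obtain ⟨p, hpN', φ, hφmono, hφtends⟩ := hN.2.1.isCompact.tendsto_subseq hpN
    have htd : Filter.Tendsto (fun m => Metric.infDist (pseq (φ m)) K) Filter.atTop
        (nhds (Metric.infDist p K)) :=
      ((Metric.continuous_infDist_pt K).continuousAt.tendsto).comp hφtends
    have hzero : Metric.infDist p K ≤ 0 := by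
      apply le_of_tendsto_of_tendsto htd tendsto_one_div_add_atTop_nhds_zero_nat
      apply Filter.Eventually.of_forall
      intro m
      calc Metric.infDist (pseq (φ m)) K ≤ 1/(φ m + 1) := (hpd (φ m)).le
        _ ≤ 1/(m+1) := by
            apply one_div_le_one_div_of_le (by positivity)
            have : (m : ℝ) ≤ (φ m : ℝ) := by exact_mod_cast hφmono.le_apply
            linarith
    have hpK : p ∈ K := by
      rw [hKcl.mem_iff_infDist_zero hKne]
      exact le_antisymm hzero Metric.infDist_nonneg
    exact hdisj p hpN' hpK
  · -- finitely many components
    rw [Set.not_infinite] at hinf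
    set V : Set T1 := ⋃ g : G, f g with hVdef
    have hVo : IsOpen V := isOpen_iUnion hJo
    have hVne : V.Nonempty := ⟨y, Set.mem_iUnion.2 ⟨1, by
      show y ∈ (fun x : T1 => (1:G) • x) '' I
      simpa [one_smul] using mem_connectedComponentIn hyKc⟩⟩
    have hVsub : V ⊆ Kᶜ := Set.iUnion_subset hJsub
    have hVuniv : V ≠ Set.univ := by
      intro h
      obtain ⟨k, hk⟩ := hKne
      exact hVsub (h ▸ Set.mem_univ k) hk
    have hVinv : InvariantSet G V := by
      intro g x hx
      obtain ⟨h, hh⟩ := Set.mem_iUnion.1 hx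
      obtain ⟨w, hw, rfl⟩ := hh
      exact Set.mem_iUnion.2 ⟨g * h, ⟨w, hw, by show (g * h) • w = g • (h • w); rw [mul_smul]⟩⟩
    have hVfr : frontier V ⊆ K := by
      apply frontier_subset_of_comp hKcl hVo
      intro s hs
      obtain ⟨g, hg⟩ := Set.mem_iUnion.1 hs
      rw [hcomp_is g] at hg
      intro t ht
      rw [← connectedComponentIn_eq hg] at ht
      exact Set.mem_iUnion.2 ⟨g, (hcomp_is g).symm ▸ ht⟩
    have hfrne : (frontier V).Nonempty := S0.frontier_nonempty hVne hVuniv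
    have heqK : frontier V = K :=
      hK.2.2.2 _ hfrne isClosed_frontier (invariant_frontier hc hVinv) hVfr
    -- K is then finite
    have hKfin : K.Finite := by
      rw [← heqK]
      have hVb : V = ⋃ J ∈ Set.range f, J := by rw [Set.biUnion_range]
      have hclV : closure V = ⋃ J ∈ Set.range f, closure J := by
        rw [hVb]
        exact hinf.closure_biUnion _
      have hsub2 : frontier V ⊆ ⋃ J ∈ Set.range f, frontier J := by
        intro t ht
        have ht2 : t ∉ V := by rw [hVo.frontier_eq] at ht; exact ht.2
        have ht1 : t ∈ closure V := ht.1
        rw [hclV] at ht1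
        obtain ⟨J, hJ, htJ⟩ := Set.mem_iUnion₂.1 ht1
        obtain ⟨g, rfl⟩ := hJ
        have htnJ : t ∉ f g := fun h => ht2 (Set.mem_iUnion.2 ⟨g, h⟩)
        exact Set.mem_iUnion₂.2 ⟨f g, ⟨g, rfl⟩, (hJo g).frontier_eq ▸ ⟨htJ, htnJ⟩⟩
      apply Set.Finite.subset _ hsub2
      apply Set.Finite.biUnion hinf
      intro J hJ
      obtain ⟨g, rfl⟩ := hJ
      obtain ⟨a, b, _, _, _, hfr⟩ := S0.arc_lemma (hJo g) (hJconn g) (hJne g) (hJuniv g)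
      exact (Set.finite_singleton _).insert _ |>.subset hfr
    exact hKinf hKfin

end Main
section Transfer

variable {G : Type*} [Group G] [MulAction G T1]

lemma minimal_homeo_cantor (hc : ∀ g : G, Continuous fun x : T1 => g • x)
    (hnofin : ¬ ∃ x : T1, (MulAction.orbit G x).Finite)
    {K : Set T1} (hK : IsMinimalSet G K) (hKuniv : K ≠ Set.univ) :
    Nonempty (K ≃ₜ (ℕ → Bool)) := by
  have hKcl := hK.2.1
  have hKne := hK.1
  have hperf : Preperfect K := minimal_perfect hc hnofin hK
  have hint : interior K = ∅ := minimal_interior_empty hc hK hKuniv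
  obtain ⟨z, hz⟩ : ∃ z : T1, z ∉ K := by
    by_contra h
    push_neg at h
    exact hKuniv (Set.eq_univ_of_forall h)
  set z₀ : ℝ := z.out with hz₀def
  have hπz₀ : ((z₀ : ℝ) : T1) = z := QuotientAddGroup.out_eq' z
  set Kr : Set ℝ := (fun t : ℝ => (t : T1)) ⁻¹' K ∩ Set.Icc z₀ (z₀+1) with hKrdef
  have hKrcl : IsClosed Kr := (hKcl.preimage S0.pi_continuous).inter isClosed_Icc
  have hKrcpt : IsCompact Kr :=
    isCompact_Icc.of_isClosed_subset hKrcl Set.inter_subset_right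
  have hKrIoo : Kr ⊆ Set.Ioo z₀ (z₀+1) := by
    rintro t ⟨htK, ht1, ht2⟩
    rcases eq_or_lt_of_le ht1 with h | h
    · exfalso
      apply hz
      rw [← hπz₀, h]
      exact htK
    rcases eq_or_lt_of_le ht2 with h' | h'
    · exfalso
      apply hz
      have : ((t : ℝ) : T1) = ((z₀ : ℝ) : T1) := by
        rw [h', ← AddCircle.coe_add_period 1 z₀]
      rw [← hπz₀, ← this]
      exact htK
    · exact ⟨h, h'⟩
  have himg : (fun t : ℝ => (t : T1)) '' Kr = K := by
    apply Set.Subset.antisymm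
    · rintro _ ⟨t, ht, rfl⟩; exact ht.1
    · intro k hk
      obtain ⟨t, htIco, rfl⟩ := S0.pi_rep z₀ k
      exact ⟨t, ⟨hk, htIco.1, htIco.2.le⟩, rfl⟩
  have hinjOn : Set.InjOn (fun t : ℝ => (t : T1)) Kr := (S0.pi_injOn_Ioo z₀).mono hKrIoo
  have hKrne : Kr.Nonempty := by
    obtain ⟨k, hk⟩ := hKne
    obtain ⟨t, ht, _⟩ := (himg ▸ hk : k ∈ (fun t : ℝ => (t : T1)) '' Kr)
    exact ⟨t, ht⟩
  -- transfer preperfect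
  have hKrperf : Preperfect Kr := by
    intro t ht
    rw [accPt_iff_nhds]
    intro U hU
    have hU2 : U ∩ Set.Ioo z₀ (z₀+1) ∈ nhds t :=
      Filter.inter_mem hU (isOpen_Ioo.mem_nhds (hKrIoo ht))
    obtain ⟨V, hVU, hVopen, htV⟩ := mem_nhds_iff.1 hU2
    have hπV : (fun s : ℝ => (s : T1)) '' V ∈ nhds ((t : ℝ) : T1) :=
      (S0.pi_open _ hVopen).mem_nhds (Set.mem_image_of_mem _ htV)
    have htK : ((t : ℝ) : T1) ∈ K := ht.1
    have hKacc := accPt_iff_nhds.1 (hperf _ htK)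
    obtain ⟨w, ⟨hw1, hw2⟩, hw3⟩ := hKacc _ hπV
    obtain ⟨u, huV, rfl⟩ := hw1
    have huIoo : u ∈ Set.Ioo z₀ (z₀+1) := (hVU huV).2
    refine ⟨u, ⟨(hVU huV).1, hw2, huIoo.1.le, huIoo.2.le⟩, ?_⟩
    rintro rfl
    exact hw3 rfl
  -- transfer empty interior
  have hKrint : interior Kr = ∅ := by
    rw [Set.eq_empty_iff_forall_notMem]
    intro t ht
    obtain ⟨V, hVsub, hVopen, htV⟩ := mem_nhds_iff.1 (mem_interior_iff_mem_nhds.1 ht)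
    have : (fun s : ℝ => (s : T1)) '' V ⊆ K := by
      rintro _ ⟨u, hu, rfl⟩
      exact (hVsub hu).1
    have h2 : (fun s : ℝ => (s : T1)) '' V ⊆ interior K :=
      interior_maximal this (S0.pi_open _ hVopen)
    rw [hint] at h2
    exact h2 (Set.mem_image_of_mem _ htV) 
  -- the homeomorphism Kr ≃ₜ K
  obtain ⟨e⟩ := cantorR hKrne hKrcpt hKrperf hKrint
  haveI : CompactSpace Kr := isCompact_iff_compactSpace.1 hKrcpt
  have hbij : Function.Bijective (fun t : Kr => (⟨(t : ℝ), himg ▸ Set.mem_image_of_mem _ t.2⟩ : K)) := by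
    constructor
    · intro s t h
      exact Subtype.ext (hinjOn s.2 t.2 (congrArg Subtype.val h))
    · rintro ⟨k, hk⟩
      obtain ⟨t, ht, htk⟩ := (himg ▸ hk : k ∈ (fun t : ℝ => (t : T1)) '' Kr)
      exact ⟨⟨t, ht⟩, Subtype.ext htk⟩
  have hcont : Continuous (fun t : Kr => (⟨(t : ℝ), himg ▸ Set.mem_image_of_mem _ t.2⟩ : K)) :=
    (S0.pi_continuous.comp continuous_subtype_val).subtype_mk _
  have e2 : Kr ≃ₜ K :=
    @Continuous.homeoOfEquivCompactToT2 _ _ _ _ _ _ (Equiv.ofBijective _ hbij) hcont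
  exact ⟨e2.symm.trans e⟩

end Transfer
lemma t1_univ_infinite : (Set.univ : Set T1).Infinite := by
  have h : (Set.Ico (0:ℝ) 1).Infinite := Set.Ico_infinite one_pos
  have hinj : Set.InjOn (fun t : ℝ => (t : T1)) (Set.Ico (0:ℝ) 1) := by
    intro x hx y hy hxy
    exact (AddCircle.coe_eq_coe_iff_of_mem_Ico (p := (1:ℝ)) (a := (0:ℝ))
      (by simpa using hx) (by simpa using hy)).1 hxy
  exact (h.image hinj).mono (Set.subset_univ _)

lemma t1_infinite : Infinite T1 := Set.infinite_univ_iff.1 t1_univ_infinite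

lemma not_univ_cantor (e : (Set.univ : Set T1) ≃ₜ (ℕ → Bool)) : False := by
  set q : T1 → (ℕ → Bool) := fun x => e ⟨x, Set.mem_univ x⟩ with hq
  have hqc : Continuous q := e.continuous.comp (continuous_id.subtype_mk _)
  have hqs : Function.Surjective q := by
    intro b
    exact ⟨(e.symm b : (Set.univ : Set T1)), by simp [hq]⟩
  have hpc : IsPreconnected (Set.univ : Set (ℕ → Bool)) := by
    have h1 := (isPreconnected_univ (α := T1)).image q hqc.continuousOn
    rwa [Set.image_univ, hqs.range_eq] at h1
  haveI : PreconnectedSpace (ℕ → Bool) := ⟨hpc⟩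
  have hclopen : IsClopen {y : ℕ → Bool | y 0 = false} := by
    have : {y : ℕ → Bool | y 0 = false} = (fun y : ℕ → Bool => y 0) ⁻¹' {false} := rfl
    rw [this]
    exact (isClopen_discrete _).preimage (continuous_apply 0)
  rcases isClopen_iff.1 hclopen with h | h
  · have : (fun _ : ℕ => false) ∈ ({y : ℕ → Bool | y 0 = false}) := rfl
    rw [h] at this
    exact this
  · have : (fun _ : ℕ => true) ∈ ({y : ℕ → Bool | y 0 = false}) := h ▸ Set.mem_univ _
    simp at this
/-- Ghys, Prop. 5.6: an orientation-preserving action of a countable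
discrete group on the circle satisfies exactly one of: (1) a finite orbit exists;
(2) the action is minimal; (3) there is a unique minimal set, homeomorphic to the
Cantor set (here `ℕ → Bool` with the product topology). -/
theorem statement0 (G : Type*) [Group G] [Countable G] [MulAction G T1]
    (hor : OrientationPreservingAction G) :
    ((∃ x : T1, (MulAction.orbit G x).Finite) ∧
        ¬ IsMinimalSet G (Set.univ : Set T1) ∧
        ¬ ((∃! Y : Set T1, IsMinimalSet G Y) ∧
            ∀ Y : Set T1, IsMinimalSet G Y → Nonempty (Y ≃ₜ (ℕ → Bool)))) ∨
      ((¬ ∃ x : T1, (MulAction.orbit G x).Finite) ∧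
        IsMinimalSet G (Set.univ : Set T1) ∧
        ¬ ((∃! Y : Set T1, IsMinimalSet G Y) ∧
            ∀ Y : Set T1, IsMinimalSet G Y → Nonempty (Y ≃ₜ (ℕ → Bool)))) ∨
      ((¬ ∃ x : T1, (MulAction.orbit G x).Finite) ∧
        ¬ IsMinimalSet G (Set.univ : Set T1) ∧
        ((∃! Y : Set T1, IsMinimalSet G Y) ∧
          ∀ Y : Set T1, IsMinimalSet G Y → Nonempty (Y ≃ₜ (ℕ → Bool)))) := by
  have hcont : ∀ g : G, Continuous fun x : T1 => g • x := hor.1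
  haveI : Infinite T1 := t1_infinite
  by_cases hfin : ∃ x : T1, (MulAction.orbit G x).Finite
  · left
    have hnotmin : ¬ IsMinimalSet G (Set.univ : Set T1) := by
      intro hmin
      obtain ⟨x, hx⟩ := hfin
      have hne : (MulAction.orbit G x).Nonempty := ⟨x, MulAction.mem_orbit_self x⟩
      have heq := hmin.2.2.2 _ hne hx.isClosed (orbit_invariant x) (Set.subset_univ _)
      exact Set.infinite_univ (heq ▸ hx)
    refine ⟨hfin, hnotmin, ?_⟩
    rintro ⟨-, hcantor⟩
    obtain ⟨x, hx⟩ := hfin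
    obtain ⟨Y, hYsub, hY⟩ := exists_minimal_sub (G := G)
      ⟨x, MulAction.mem_orbit_self x⟩ hx.isClosed (orbit_invariant x)
    obtain ⟨e⟩ := hcantor Y hY
    have hYfin : Y.Finite := hx.subset hYsub
    haveI := hYfin.to_subtype
    exact @not_finite (ℕ → Bool) _ (Finite.of_equiv _ e.toEquiv)
  · by_cases hmin : IsMinimalSet G (Set.univ : Set T1)
    · right; left
      refine ⟨hfin, hmin, ?_⟩
      rintro ⟨-, hcantor⟩
      obtain ⟨e⟩ := hcantor _ hmin
      exact not_univ_cantor e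
    · right; right
      obtain ⟨K, -, hK⟩ := exists_minimal_sub (G := G) (S := Set.univ)
        Set.univ_nonempty isClosed_univ (fun g x _ => Set.mem_univ _)
      have hKuniv : K ≠ Set.univ := fun h => hmin (h ▸ hK)
      refine ⟨hfin, hmin, ⟨K, hK, fun Y hY => minimal_unique hcont hfin hK hKuniv hY⟩, ?_⟩
      intro Y hY
      have hYK : Y = K := minimal_unique hcont hfin hK hKuniv hY
      subst hYK
      exact minimal_homeo_cantor hcont hfin hK hKuniv
end
end

section
/- Let G be a discrete amenable group acting on the circle by orientation-preserving homeomorphisms. Then the rotation number map ρ : G → ℝ/ℤ is a group homomorphism. -/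
open MeasureTheory Topology Filter Set Function

noncomputable section

variable (G : Type*) [Group G] [MulAction G T1]

/-- A left-invariant finitely additive probability mean on subsets of `G`;
its existence is one of the standard characterisations of amenability of a
discrete group. -/
structure InvariantMean (G : Type*) [Group G] where
  m : Set G → ℝ
  nonneg : ∀ S : Set G, 0 ≤ m S
  total : m Set.univ = 1
  additive : ∀ S T : Set G, Disjoint S T → m (S ∪ T) = m S + m T
  invariant : ∀ (g : G) (S : Set G), m ((fun h => g * h) '' S) = m S

namespace S3


/-- ℤ-periodicity of displacement -/
lemma lift_add_nat (F : ℝ → ℝ) (hper : ∀ x, F (x + 1) = F x + 1) (x : ℝ) (n : ℕ) :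
    F (x + n) = F x + n := by
  induction n with
  | zero => simp
  | succ k ih => push_cast; rw [← add_assoc, hper, ih]; push_cast; ring

lemma lift_add_int (F : ℝ → ℝ) (hper : ∀ x, F (x + 1) = F x + 1) (x : ℝ) (n : ℤ) :
    F (x + n) = F x + n := by
  induction n using Int.rec with
  | ofNat k => exact_mod_cast lift_add_nat F hper x k
  | negSucc k =>
    have := lift_add_nat F hper (x + Int.negSucc k) (k + 1)
    have h2 : x + Int.negSucc k + (↑(k+1) : ℝ) = x := by push_cast; ring
    rw [h2] at this
    push_cast
    push_cast at this
    linarith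

lemma disp_bound (F : ℝ → ℝ) (hm : Monotone F) (hper : ∀ x, F (x + 1) = F x + 1)
    (x y : ℝ) : F y - y ≤ F x - x + 1 := by
  set k : ℤ := ⌈y - x⌉ with hk
  have h1 : y ≤ x + k := by
    have := Int.le_ceil (y - x); linarith
  have h2 : (k : ℝ) ≤ y - x + 1 := by
    have := Int.ceil_le_floor_add_one (y - x)
    have h3 := Int.floor_le (y - x)
    have : (k:ℝ) ≤ (⌊y - x⌋ : ℝ) + 1 := by exact_mod_cast this
    linarith
  have := hm h1
  rw [lift_add_int F hper x k] at this
  linarith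

lemma iter_per (F : ℝ → ℝ) (hper : ∀ x, F (x + 1) = F x + 1) (n : ℕ) (x : ℝ) :
    F^[n] (x + 1) = F^[n] x + 1 := by
  induction n generalizing x with
  | zero => simp
  | succ k ih => rw [Function.iterate_succ_apply, Function.iterate_succ_apply, hper, ih]

/-- Existence of the translation number with uniform estimates. -/
lemma exists_tau (F : ℝ → ℝ) (hm : Monotone F) (hper : ∀ x, F (x + 1) = F x + 1) :
    ∃ τ : ℝ, (∀ (n : ℕ) (x : ℝ), |F^[n] x - x - n * τ| ≤ 2) ∧
      Tendsto (fun n : ℕ => F^[n] 0 / n) atTop (nhds τ) := by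
  set a : ℕ → ℝ := fun n => F^[n] 0 with ha
  have hmn : ∀ n, Monotone (F^[n]) := fun n => hm.iterate n
  have hpn : ∀ n x, F^[n] (x + 1) = F^[n] x + 1 := fun n x => iter_per F hper n x
  have hdisp : ∀ (n : ℕ) (x y : ℝ), F^[n] y - y ≤ F^[n] x - x + 1 :=
    fun n x y => disp_bound (F^[n]) (hmn n) (hpn n) x y
  have hsub : ∀ m n : ℕ, a (m + n) ≤ a m + a n + 1 := by
    intro m n
    have : a (m + n) = F^[n] (a m) := by
      rw [ha]; simp [Function.iterate_add_apply, add_comm m n]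
    rw [this]
    have := hdisp n 0 (a m)
    simp only [sub_zero] at this
    have : F^[n] (a m) - a m ≤ a n + 1 := by simpa using this
    linarith
  have hsup : ∀ m n : ℕ, a m + a n - 1 ≤ a (m + n) := by
    intro m n
    have heq : a (m + n) = F^[n] (a m) := by
      rw [ha]; simp [Function.iterate_add_apply, add_comm m n]
    rw [heq]
    have := hdisp n (a m) 0
    simp only [sub_zero] at this
    linarith
  -- linear bounds on a n
  have hub : ∀ n : ℕ, a n ≤ n * (a 1 + 1) := by
    intro n
    induction n with
    | zero => simp [ha]
    | succ k ih =>
      have := hsub k 1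
      push_cast
      nlinarith
  have hlb : ∀ n : ℕ, n * (a 1 - 1) ≤ a n := by
    intro n
    induction n with
    | zero => simp [ha]
    | succ k ih =>
      have := hsup k 1
      push_cast
      nlinarith
  -- Fekete
  have hU : Subadditive (fun n => a n + 1) := by
    intro m n; have := hsub m n; simp only []; linarith
  have hV : Subadditive (fun n => 1 - a n) := by
    intro m n; have := hsup m n; simp only []; linarith
  have hUb : BddBelow (range fun n : ℕ => (a n + 1) / n) := by
    refine ⟨min 0 (a 1 - 1), ?_⟩
    rintro x ⟨n, rfl⟩
    rcases Nat.eq_zero_or_pos n with h0 | hpos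
    · subst h0; simp
    · have hn : (0:ℝ) < n := by exact_mod_cast hpos
      have : a 1 - 1 ≤ (a n + 1) / n := by
        rw [le_div_iff₀ hn]
        have := hlb n
        nlinarith
      exact le_trans (min_le_right _ _) this
  have hVb : BddBelow (range fun n : ℕ => (1 - a n) / n) := by
    refine ⟨min 0 (-(a 1 + 1)), ?_⟩
    rintro x ⟨n, rfl⟩
    rcases Nat.eq_zero_or_pos n with h0 | hpos
    · subst h0; simp
    · have hn : (0:ℝ) < n := by exact_mod_cast hpos
      have : -(a 1 + 1) ≤ (1 - a n) / n := by
        rw [le_div_iff₀ hn]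
        have := hub n
        nlinarith
      exact le_trans (min_le_right _ _) this
  set τ := hU.lim with hτ
  have hUt := hU.tendsto_lim hUb
  have hVt := hV.tendsto_lim hVb
  have hinv : Tendsto (fun n : ℕ => (1:ℝ) / n) atTop (nhds 0) :=
    tendsto_one_div_atTop_nhds_zero_nat
  have htend : Tendsto (fun n : ℕ => a n / n) atTop (nhds τ) := by
    have : (fun n : ℕ => a n / n) = fun n : ℕ => (a n + 1) / n - 1 / n := by
      funext n; ring
    rw [this]
    simpa using hUt.sub hinv
  -- v.lim = -τ
  have hVlim : hV.lim = -τ := by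
    have h2 : Tendsto (fun n : ℕ => (1 - a n) / n) atTop (nhds (-τ)) := by
      have : (fun n : ℕ => (1 - a n) / n) = fun n : ℕ => 1 / n - a n / n := by
        funext n; ring
      rw [this]
      simpa using hinv.sub htend
    exact tendsto_nhds_unique hVt h2
  refine ⟨τ, ?_, htend⟩
  intro n x
  -- first |a n - n τ| ≤ 1
  have hkey : |a n - n * τ| ≤ 1 := by
    rcases Nat.eq_zero_or_pos n with h0 | hpos
    · subst h0; simp [ha]
    · have hn0 : n ≠ 0 := Nat.pos_iff_ne_zero.mp hpos
      have hn : (0:ℝ) < n := by exact_mod_cast hpos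
      have h1 : τ ≤ (a n + 1) / n := hU.lim_le_div hUb hn0
      have h2 : -τ ≤ (1 - a n) / n := by
        rw [← hVlim]; exact hV.lim_le_div hVb hn0
      rw [le_div_iff₀ hn] at h1 h2
      rw [abs_le]
      constructor <;> nlinarith
  have d1 := hdisp n 0 x
  have d2 := hdisp n x 0
  simp only [sub_zero] at d1 d2
  rw [abs_le] at hkey ⊢
  constructor <;> [nlinarith; nlinarith]

variable {H : Type*} [Group H] (μ : InvariantMean H)

lemma m_empty : μ.m ∅ = 0 := by
  have := μ.additive ∅ ∅ (disjoint_bot_left)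
  simp at this; linarith

lemma m_mono {S T : Set H} (h : S ⊆ T) : μ.m S ≤ μ.m T := by
  have h1 := μ.additive S (T \ S) Set.disjoint_sdiff_right
  rw [Set.union_diff_cancel h] at h1
  have := μ.nonneg (T \ S)
  linarith

lemma m_le_one (S : Set H) : μ.m S ≤ 1 := by
  rw [← μ.total]; exact m_mono μ (Set.subset_univ S)

lemma m_preimage_mul (h : H) (S : Set H) : μ.m ((fun k => h * k) ⁻¹' S) = μ.m S := by
  have himg : (fun k => h⁻¹ * k) '' S = (fun k => h * k) ⁻¹' S := by
    ext k
    simp only [Set.mem_image, Set.mem_preimage]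
    constructor
    · rintro ⟨s, hs, rfl⟩; simpa using hs
    · intro hk; exact ⟨h * k, hk, by group⟩
  rw [← himg, μ.invariant]

lemma m_finsetSum {ι : Type*} (s : Finset ι) (A : ι → Set H)
    (hdisj : ∀ i ∈ s, ∀ j ∈ s, i ≠ j → Disjoint (A i) (A j)) :
    μ.m (⋃ i ∈ s, A i) = ∑ i ∈ s, μ.m (A i) := by
  classical
  induction s using Finset.induction_on with
  | empty => simpa using m_empty μ
  | @insert a s' hni ih =>
    rw [Finset.sum_insert hni]
    have hd : Disjoint (A a) (⋃ i ∈ s', A i) := by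
      rw [Set.disjoint_iUnion_right]
      intro i
      rw [Set.disjoint_iUnion_right]
      intro hi
      exact hdisj a (Finset.mem_insert_self a s') i (Finset.mem_insert_of_mem hi)
        (by rintro rfl; exact hni hi)
    have := μ.additive (A a) (⋃ i ∈ s', A i) hd
    rw [Finset.set_biUnion_insert, this, ih]
    intro i hi j hj hij
    exact hdisj i (Finset.mem_insert_of_mem hi) j (Finset.mem_insert_of_mem hj) hij

/-! ### The finitely additive integral -/

/-- `mint μ a b f = a + ∫_a^b μ{f > t} dt`. -/
def mint (a b : ℝ) (f : H → ℝ) : ℝ :=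
  a + ∫ t in a..b, μ.m {k | t < f k}

lemma anti_integrand (f : H → ℝ) (A : Set H) :
    Antitone (fun t => μ.m ({k | t < f k} ∩ A)) := by
  intro t t' h
  apply m_mono
  intro k hk
  exact ⟨lt_of_le_of_lt h hk.1, hk.2⟩

lemma anti_integrand' (f : H → ℝ) : Antitone (fun t => μ.m {k | t < f k}) := by
  have := anti_integrand μ f Set.univ
  simpa using this

lemma integrable_integrand (f : H → ℝ) (A : Set H) (a b : ℝ) :
    IntervalIntegrable (fun t => μ.m ({k | t < f k} ∩ A)) volume a b :=
  (anti_integrand μ f A).intervalIntegrable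

lemma integrable_integrand' (f : H → ℝ) (a b : ℝ) :
    IntervalIntegrable (fun t => μ.m {k | t < f k}) volume a b :=
  (anti_integrand' μ f).intervalIntegrable

/-- congruence on open interval suffices -/
lemma integral_congr_Ioo {a b : ℝ} {φ ψ : ℝ → ℝ} (hab : a ≤ b)
    (h : ∀ t ∈ Ioo a b, φ t = ψ t) :
    ∫ t in a..b, φ t = ∫ t in a..b, ψ t := by
  apply intervalIntegral.integral_congr_ae
  rw [Filter.eventually_iff, MeasureTheory.mem_ae_iff]
  refine measure_mono_null (fun t ht => ?_) (measure_singleton b)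
  simp only [mem_compl_iff, mem_setOf_eq, Classical.not_imp] at ht
  obtain ⟨ht1, ht2⟩ := ht
  rw [uIoc_of_le hab] at ht1
  rcases eq_or_lt_of_le ht1.2 with h1 | h1
  · exact h1
  · exact absurd (h t ⟨ht1.1, h1⟩) ht2

/-- the lower part of the integral, where `t < a' ≤ f`, is constant `1`. -/
lemma integral_low (f : H → ℝ) {a a' : ℝ} (h : a ≤ a') (hf : ∀ k, a' ≤ f k) :
    ∫ t in a..a', μ.m {k | t < f k} = a' - a := by
  have : ∫ t in a..a', μ.m {k | t < f k} = ∫ t in a..a', (1:ℝ) := by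
    apply integral_congr_Ioo h
    intro t ht
    have : {k : H | t < f k} = Set.univ := by
      ext k; simp only [mem_setOf_eq, mem_univ, iff_true]
      exact lt_of_lt_of_le ht.2 (hf k)
    rw [this, μ.total]
  rw [this]; simp

lemma integral_high (f : H → ℝ) {b b' : ℝ} (h : b ≤ b') (hf : ∀ k, f k ≤ b) :
    ∫ t in b..b', μ.m {k | t < f k} = 0 := by
  have : ∫ t in b..b', μ.m {k | t < f k} = ∫ t in b..b', (0:ℝ) := by
    apply integral_congr_Ioo h
    intro t ht
    have : {k : H | t < f k} = ∅ := by
      ext k; simp only [mem_setOf_eq, mem_empty_iff_false, iff_false, not_lt]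
      exact le_trans (hf k) (le_of_lt ht.1)
    rw [this, m_empty]
  rw [this]; simp

/-- independence of the bounding interval -/
lemma mint_indep (f : H → ℝ) {a b a' b' : ℝ} (ha : a' ≤ a) (hb : b ≤ b')
    (hab : a ≤ b) (hf : ∀ k, f k ∈ Icc a b) :
    mint μ a' b' f = mint μ a b f := by
  unfold mint
  have i1 := integrable_integrand' μ f a' a
  have i2 := integrable_integrand' μ f a b
  have i3 := integrable_integrand' μ f b b'
  have i12 := integrable_integrand' μ f a' b
  rw [← intervalIntegral.integral_add_adjacent_intervals i12 i3,
    ← intervalIntegral.integral_add_adjacent_intervals i1 i2]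
  rw [integral_low μ f ha (fun k => (hf k).1), integral_high μ f hb (fun k => (hf k).2)]
  ring

lemma mint_mono {f f' : H → ℝ} {a b : ℝ} (hab : a ≤ b) (h : ∀ k, f k ≤ f' k) :
    mint μ a b f ≤ mint μ a b f' := by
  unfold mint
  have := intervalIntegral.integral_mono_on hab (integrable_integrand' μ f a b)
    (integrable_integrand' μ f' a b) (fun t _ => m_mono μ (fun k hk => lt_of_lt_of_le hk (h k)))
  linarith

lemma mint_extend_right (f : H → ℝ) {a b b' : ℝ} (hb : b ≤ b') :
    mint μ a b f ≤ mint μ a b' f := by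
  unfold mint
  rw [← intervalIntegral.integral_add_adjacent_intervals (integrable_integrand' μ f a b)
    (integrable_integrand' μ f b b')]
  have : 0 ≤ ∫ t in b..b', μ.m {k | t < f k} :=
    intervalIntegral.integral_nonneg hb (fun u _ => μ.nonneg _)
  linarith

lemma mint_extend_left (f : H → ℝ) {a a' b : ℝ} (ha : a' ≤ a) (hab : a ≤ b) :
    mint μ a' b f ≤ mint μ a b f := by
  unfold mint
  rw [← intervalIntegral.integral_add_adjacent_intervals (integrable_integrand' μ f a' a)
    (integrable_integrand' μ f a b)]
  have h1 : ∫ t in a'..a, μ.m {k | t < f k} ≤ ∫ t in a'..a, (1:ℝ) :=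
    intervalIntegral.integral_mono_on ha (integrable_integrand' μ f a' a)
      intervalIntegrable_const (fun t _ => m_le_one μ _)
  simp only [intervalIntegral.integral_const, smul_eq_mul, mul_one] at h1
  linarith

lemma mint_const {a b c : ℝ} (hac : a ≤ c) (hcb : c ≤ b) :
    mint μ a b (fun _ => c) = c := by
  unfold mint
  rw [← intervalIntegral.integral_add_adjacent_intervals
    (integrable_integrand' μ (fun _ => c) a c) (integrable_integrand' μ (fun _ => c) c b)]
  rw [integral_low μ _ hac (fun k => le_refl c), integral_high μ _ hcb (fun k => le_refl c)]
  ring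

lemma mint_invariant (f : H → ℝ) (h : H) (a b : ℝ) :
    mint μ a b (fun k => f (h * k)) = mint μ a b f := by
  unfold mint
  congr 1
  apply intervalIntegral.integral_congr
  intro t _
  show μ.m {k : H | t < f (h * k)} = μ.m {k | t < f k}
  have heq : {k : H | t < f (h * k)} = (fun k => h * k) ⁻¹' {k | t < f k} := rfl
  rw [heq, m_preimage_mul]

lemma mint_shift (f : H → ℝ) (a b c : ℝ) :
    mint μ (a + c) (b + c) (fun k => f k + c) = mint μ a b f + c := by
  unfold mint
  have h1 : ∀ t : ℝ, {k : H | t < f k + c} = {k : H | t - c < f k} := by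
    intro t; ext k; simp only [mem_setOf_eq]; constructor <;> intro <;> linarith
  have h2 : (∫ t in (a+c)..(b+c), μ.m {k | t < f k + c})
      = ∫ t in (a+c)..(b+c), (fun u => μ.m {k | u < f k}) (t - c) := by
    apply intervalIntegral.integral_congr
    intro t _
    simp only [h1]
  rw [h2, intervalIntegral.integral_comp_sub_right (fun u => μ.m {k | u < f k}) c]
  have e1 : a + c - c = a := by ring
  have e2 : b + c - c = b := by ring
  rw [e1, e2]
  ring

lemma mint_add_simple (f s : H → ℝ) {a b a₂ b₂ : ℝ} (hab : a ≤ b)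
    (hf : ∀ k, f k ∈ Icc a b) (hs : ∀ k, s k ∈ Icc a₂ b₂) (hfin : (range s).Finite) :
    mint μ (a + a₂) (b + b₂) (fun k => f k + s k)
      = mint μ a b f + ∑ y ∈ hfin.toFinset, y * μ.m (s ⁻¹' {y}) := by
  classical
  set R := hfin.toFinset with hR
  set A : ℝ → Set H := fun y => s ⁻¹' {y} with hA
  have hmemR : ∀ k : H, s k ∈ R := by
    intro k; rw [hR, Set.Finite.mem_toFinset]; exact mem_range_self k
  have hyR : ∀ y ∈ R, a₂ ≤ y ∧ y ≤ b₂ := by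
    intro y hy
    rw [hR, Set.Finite.mem_toFinset] at hy
    obtain ⟨k, rfl⟩ := hy
    exact ⟨(hs k).1, (hs k).2⟩
  have hdisj : ∀ y ∈ R, ∀ z ∈ R, y ≠ z → Disjoint (A y) (A z) := by
    intro y _ z _ hyz
    rw [Set.disjoint_left]
    rintro k hk1 hk2
    exact hyz (by rw [← hk1.out, hk2.out])
  have hpart : ∀ S : Set H, μ.m S = ∑ y ∈ R, μ.m (S ∩ A y) := by
    intro S
    have hcov : (⋃ y ∈ R, S ∩ A y) = S := by
      ext k
      simp only [Set.mem_iUnion]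
      constructor
      · rintro ⟨y, _, hk, _⟩; exact hk
      · intro hk; exact ⟨s k, hmemR k, hk, rfl⟩
    calc μ.m S = μ.m (⋃ y ∈ R, S ∩ A y) := by rw [hcov]
      _ = ∑ y ∈ R, μ.m (S ∩ A y) := m_finsetSum μ R _ (fun i hi j hj hij =>
        ((hdisj i hi j hj hij).mono inter_subset_right inter_subset_right))
  -- integral splits as sum over R
  have hstep1 : (∫ t in (a+a₂)..(b+b₂), μ.m {k | t < f k + s k})
      = ∑ y ∈ R, ∫ t in (a+a₂)..(b+b₂), μ.m ({k | t < f k + s k} ∩ A y) := by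
    rw [← intervalIntegral.integral_finset_sum
      (fun y _ => integrable_integrand μ (fun k => f k + s k) (A y) _ _)]
    apply intervalIntegral.integral_congr
    intro t _
    exact hpart _
  -- each term
  have hterm : ∀ y ∈ R, (∫ t in (a+a₂)..(b+b₂), μ.m ({k | t < f k + s k} ∩ A y))
      = (y - a₂) * μ.m (A y) + ∫ t in a..b, μ.m ({k | t < f k} ∩ A y) := by
    intro y hy
    obtain ⟨hy1, hy2⟩ := hyR y hy
    have hset : ∀ t : ℝ, {k : H | t < f k + s k} ∩ A y = {k | t - y < f k} ∩ A y := by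
      intro t
      ext k
      simp only [Set.mem_inter_iff, mem_setOf_eq, hA, Set.mem_preimage, Set.mem_singleton_iff]
      constructor
      · rintro ⟨h1, h2⟩; rw [h2] at h1; exact ⟨by linarith, h2⟩
      · rintro ⟨h1, h2⟩; rw [h2]; exact ⟨by linarith, rfl⟩
    have hcongr : (∫ t in (a+a₂)..(b+b₂), μ.m ({k | t < f k + s k} ∩ A y))
        = ∫ t in (a+a₂)..(b+b₂), (fun u => μ.m ({k | u < f k} ∩ A y)) (t - y) := by
      apply intervalIntegral.integral_congr
      intro t _
      simp only [hset]
    rw [hcongr, intervalIntegral.integral_comp_sub_right (fun u => μ.m ({k | u < f k} ∩ A y)) y]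
    have hlow : a + a₂ - y ≤ a := by linarith
    have hhigh : b ≤ b + b₂ - y := by linarith
    rw [← intervalIntegral.integral_add_adjacent_intervals
        (integrable_integrand μ f (A y) (a + a₂ - y) b)
        (integrable_integrand μ f (A y) b (b + b₂ - y)),
      ← intervalIntegral.integral_add_adjacent_intervals
        (integrable_integrand μ f (A y) (a + a₂ - y) a)
        (integrable_integrand μ f (A y) a b)]
    have hl : (∫ t in (a+a₂-y)..a, μ.m ({k | t < f k} ∩ A y))
        = (y - a₂) * μ.m (A y) := by
      have : (∫ t in (a+a₂-y)..a, μ.m ({k | t < f k} ∩ A y))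
          = ∫ t in (a+a₂-y)..a, μ.m (A y) := by
        apply integral_congr_Ioo hlow
        intro t ht
        congr 1
        have : {k : H | t < f k} = Set.univ := by
          ext k; simp only [mem_setOf_eq, mem_univ, iff_true]
          exact lt_of_lt_of_le ht.2 (hf k).1
        rw [this, Set.univ_inter]
      rw [this]
      simp only [intervalIntegral.integral_const, smul_eq_mul]
      ring
    have hh : (∫ t in b..(b+b₂-y), μ.m ({k | t < f k} ∩ A y)) = 0 := by
      have : (∫ t in b..(b+b₂-y), μ.m ({k | t < f k} ∩ A y))
          = ∫ t in b..(b+b₂-y), (0:ℝ) := by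
        apply integral_congr_Ioo hhigh
        intro t ht
        have : {k : H | t < f k} ∩ A y = ∅ := by
          apply Set.eq_empty_of_subset_empty
          rintro k ⟨hk, _⟩
          exact absurd (lt_of_le_of_lt (hf k).2 ht.1) (not_lt.mpr (le_of_lt hk))
        rw [this, m_empty]
      rw [this]; simp
    rw [hl, hh]
    ring
  have hsum1 : μ.m (Set.univ : Set H) = ∑ y ∈ R, μ.m (A y) := by
    have := hpart Set.univ
    simpa using this
  have hsplit : (∫ t in a..b, μ.m {k | t < f k})
      = ∑ y ∈ R, ∫ t in a..b, μ.m ({k | t < f k} ∩ A y) := by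
    rw [← intervalIntegral.integral_finset_sum
      (fun y _ => integrable_integrand μ f (A y) _ _)]
    apply intervalIntegral.integral_congr
    intro t _
    exact hpart _
  unfold mint
  rw [hstep1, Finset.sum_congr rfl hterm]
  rw [Finset.sum_add_distrib]
  rw [← hsplit]
  have : ∑ y ∈ R, (y - a₂) * μ.m (A y)
      = (∑ y ∈ R, y * μ.m (A y)) - a₂ * ∑ y ∈ R, μ.m (A y) := by
    rw [Finset.mul_sum, ← Finset.sum_sub_distrib]
    congr 1; funext y; ring
  rw [this, ← hsum1, μ.total]
  ring

lemma mint_simple (s : H → ℝ) {a₂ b₂ : ℝ} (hs : ∀ k, s k ∈ Icc a₂ b₂)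
    (hfin : (range s).Finite) :
    mint μ a₂ b₂ s = ∑ y ∈ hfin.toFinset, y * μ.m (s ⁻¹' {y}) := by
  have h := mint_add_simple μ (fun _ => (0:ℝ)) s (le_refl 0)
    (fun k => ⟨le_refl 0, le_refl 0⟩) hs hfin
  have h0 : mint μ 0 0 (fun _ => (0:ℝ)) = 0 := by
    unfold mint; simp
  simp only [zero_add, h0] at h
  exact h

lemma mint_add (f₁ f₂ : H → ℝ) {a₁ b₁ a₂ b₂ : ℝ}
    (hf₁ : ∀ k, f₁ k ∈ Icc a₁ b₁) (hf₂ : ∀ k, f₂ k ∈ Icc a₂ b₂) :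
    mint μ (a₁ + a₂) (b₁ + b₂) (fun k => f₁ k + f₂ k)
      = mint μ a₁ b₁ f₁ + mint μ a₂ b₂ f₂ := by
  classical
  have hab₁ : a₁ ≤ b₁ := le_trans (hf₁ 1).1 (hf₁ 1).2
  have hab₂ : a₂ ≤ b₂ := le_trans (hf₂ 1).1 (hf₂ 1).2
  set L := mint μ (a₁ + a₂) (b₁ + b₂) (fun k => f₁ k + f₂ k) with hL
  set R := mint μ a₁ b₁ f₁ + mint μ a₂ b₂ f₂ with hRdef
  have key : ∀ ε : ℝ, 0 < ε → |L - R| ≤ ε := by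
    intro ε hε
    set s : H → ℝ := fun k => ε * ⌊f₂ k / ε⌋ with hsdef
    have hsle : ∀ k, s k ≤ f₂ k := by
      intro k
      have h1 : (⌊f₂ k / ε⌋ : ℝ) ≤ f₂ k / ε := Int.floor_le _
      calc ε * (⌊f₂ k / ε⌋ : ℝ) ≤ ε * (f₂ k / ε) := by
            exact mul_le_mul_of_nonneg_left h1 (le_of_lt hε)
        _ = f₂ k := by field_simp
    have hsge : ∀ k, f₂ k - ε ≤ s k := by
      intro k
      have h1 : f₂ k / ε < (⌊f₂ k / ε⌋ : ℝ) + 1 := Int.lt_floor_add_one _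
      have h2 : ε * (f₂ k / ε) < ε * ((⌊f₂ k / ε⌋ : ℝ) + 1) :=
        mul_lt_mul_of_pos_left h1 hε
      have h3 : ε * (f₂ k / ε) = f₂ k := by field_simp
      rw [h3] at h2
      rw [hsdef]
      simp only []
      nlinarith
    have hsbd : ∀ k, s k ∈ Icc (a₂ - ε) b₂ := by
      intro k
      exact ⟨by have := hsge k; have := (hf₂ k).1; linarith,
        le_trans (hsle k) (hf₂ k).2⟩
    have hfin : (range s).Finite := by
      apply Set.Finite.subset (Set.Finite.image (fun n : ℤ => ε * (n:ℝ))
        (Set.finite_Icc ⌈(a₂ - ε)/ε⌉ ⌊b₂/ε⌋))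
      rintro y ⟨k, rfl⟩
      refine ⟨⌊f₂ k / ε⌋, ⟨?_, ?_⟩, rfl⟩
      · rw [Int.ceil_le]
        rw [div_le_iff₀ hε]
        have := (hsbd k).1
        rw [hsdef] at this
        simp only [] at this
        linarith [this]
      · apply Int.floor_le_floor
        apply div_le_div_of_nonneg_right ?_ hε.le
        · exact (hf₂ k).2
    -- the simple function s + ε
    set s' : H → ℝ := fun k => s k + ε with hs'def
    have hfin' : (range s').Finite := by
      apply Set.Finite.subset (Set.Finite.image (fun x : ℝ => x + ε) hfin)
      rintro y ⟨k, rfl⟩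
      exact ⟨s k, mem_range_self k, rfl⟩
    have hs'bd : ∀ k, s' k ∈ Icc a₂ (b₂ + ε) := by
      intro k
      exact ⟨by have := (hsbd k).1; simp only [hs'def]; linarith,
        by have := (hsbd k).2; simp only [hs'def]; linarith⟩
    -- upper bound
    have u1 : L ≤ mint μ (a₁ + a₂) (b₁ + b₂) (fun k => f₁ k + s' k) := by
      apply mint_mono μ (by linarith)
      intro k
      have := hsge k
      simp only [hs'def]
      linarith
    have u2 : mint μ (a₁ + a₂) (b₁ + b₂) (fun k => f₁ k + s' k)
        ≤ mint μ (a₁ + a₂) (b₁ + (b₂ + ε)) (fun k => f₁ k + s' k) :=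
      mint_extend_right μ _ (by linarith)
    have u3 : mint μ (a₁ + a₂) (b₁ + (b₂ + ε)) (fun k => f₁ k + s' k)
        = mint μ a₁ b₁ f₁ + ∑ y ∈ hfin'.toFinset, y * μ.m (s' ⁻¹' {y}) :=
      mint_add_simple μ f₁ s' hab₁ hf₁ hs'bd hfin'
    have u4 : (∑ y ∈ hfin'.toFinset, y * μ.m (s' ⁻¹' {y}))
        = mint μ a₂ (b₂ + ε) s' := (mint_simple μ s' hs'bd hfin').symm
    have u5 : mint μ a₂ (b₂ + ε) s' ≤ mint μ a₂ (b₂ + ε) (fun k => f₂ k + ε) := by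
      apply mint_mono μ (by linarith)
      intro k
      show s k + ε ≤ f₂ k + ε
      have := hsle k
      linarith
    have u6 : mint μ a₂ (b₂ + ε) (fun k => f₂ k + ε)
        = mint μ (a₂ + ε) (b₂ + ε) (fun k => f₂ k + ε) := by
      apply mint_indep μ _ (by linarith) (le_refl _) (by linarith)
      intro k
      exact ⟨by have := (hf₂ k).1; linarith, by have := (hf₂ k).2; linarith⟩
    have u7 : mint μ (a₂ + ε) (b₂ + ε) (fun k => f₂ k + ε) = mint μ a₂ b₂ f₂ + ε :=
      mint_shift μ f₂ a₂ b₂ ε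
    have hupper : L ≤ R + ε := by
      rw [hRdef]
      calc L ≤ mint μ (a₁ + a₂) (b₁ + (b₂ + ε)) (fun k => f₁ k + s' k) :=
            le_trans u1 u2
        _ = mint μ a₁ b₁ f₁ + mint μ a₂ (b₂ + ε) s' := by rw [u3, u4]
        _ ≤ mint μ a₁ b₁ f₁ + (mint μ a₂ b₂ f₂ + ε) := by
            have := le_trans u5 (le_of_eq (u6.trans u7))
            linarith
        _ = mint μ a₁ b₁ f₁ + mint μ a₂ b₂ f₂ + ε := by ring
    -- lower bound
    have l1 : mint μ (a₁ + (a₂ - ε)) (b₁ + b₂) (fun k => f₁ k + s k)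
        ≤ mint μ (a₁ + a₂) (b₁ + b₂) (fun k => f₁ k + s k) :=
      mint_extend_left μ _ (by linarith) (by linarith)
    have l2 : mint μ (a₁ + a₂) (b₁ + b₂) (fun k => f₁ k + s k) ≤ L := by
      apply mint_mono μ (by linarith)
      intro k
      have := hsle k
      linarith
    have l3 : mint μ (a₁ + (a₂ - ε)) (b₁ + b₂) (fun k => f₁ k + s k)
        = mint μ a₁ b₁ f₁ + ∑ y ∈ hfin.toFinset, y * μ.m (s ⁻¹' {y}) :=
      mint_add_simple μ f₁ s hab₁ hf₁ hsbd hfin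
    have l4 : (∑ y ∈ hfin.toFinset, y * μ.m (s ⁻¹' {y}))
        = mint μ (a₂ - ε) b₂ s := (mint_simple μ s hsbd hfin).symm
    have l5 : mint μ (a₂ - ε) b₂ (fun k => f₂ k + (-ε)) ≤ mint μ (a₂ - ε) b₂ s := by
      apply mint_mono μ (by linarith)
      intro k
      have := hsge k
      linarith
    have l6 : mint μ (a₂ - ε) b₂ (fun k => f₂ k + (-ε))
        = mint μ (a₂ - ε) (b₂ - ε) (fun k => f₂ k + (-ε)) := by
      refine mint_indep μ _ (le_refl _) (by linarith) (by linarith) ?_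
      intro k
      exact ⟨by have := (hf₂ k).1; linarith, by have := (hf₂ k).2; linarith⟩
    have l7 : mint μ (a₂ - ε) (b₂ - ε) (fun k => f₂ k + (-ε)) = mint μ a₂ b₂ f₂ - ε := by
      have := mint_shift μ f₂ a₂ b₂ (-ε)
      have e1 : a₂ + -ε = a₂ - ε := by ring
      have e2 : b₂ + -ε = b₂ - ε := by ring
      rw [e1, e2] at this
      rw [this]; ring
    have hlower : R - ε ≤ L := by
      rw [hRdef]
      have c1 : mint μ a₁ b₁ f₁ + (mint μ a₂ b₂ f₂ - ε)
          ≤ mint μ a₁ b₁ f₁ + mint μ (a₂ - ε) b₂ s := by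
        have := le_trans (le_of_eq (l6.trans l7).symm) l5
        linarith
      calc mint μ a₁ b₁ f₁ + mint μ a₂ b₂ f₂ - ε
          ≤ mint μ a₁ b₁ f₁ + mint μ (a₂ - ε) b₂ s := by linarith
        _ = mint μ (a₁ + (a₂ - ε)) (b₁ + b₂) (fun k => f₁ k + s k) := by rw [l3, l4]
        _ ≤ L := le_trans l1 l2
    rw [abs_le]
    constructor <;> linarith
  by_contra hne
  have habs : 0 < |L - R| := abs_pos.mpr (sub_ne_zero.mpr hne)
  have := key (|L - R| / 2) (by linarith)
  linarith

/-! ### circle lemmas -/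

/-- a section of the projection `ℝ → ℝ/ℤ` -/
def rp (x : T1) : ℝ := Quotient.out x

lemma rp_coe (x : T1) : ((rp x : ℝ) : T1) = x := QuotientAddGroup.out_eq' x

lemma coe_eq_iff {x y : ℝ} (h : (x : T1) = (y : T1)) : ∃ n : ℤ, y = x + n := by
  have := (QuotientAddGroup.eq (s := AddSubgroup.zmultiples (1:ℝ)) (a := x) (b := y)).mp h
  obtain ⟨n, hn⟩ := this
  exact ⟨n, by simp [zsmul_eq_mul] at hn; linarith⟩

lemma coe_add_int (x : ℝ) (n : ℤ) : ((x + n : ℝ) : T1) = (x : T1) := by simp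

lemma disp_congr (F : ℝ → ℝ) (hper : ∀ x, F (x + 1) = F x + 1) {y y' : ℝ}
    (h : (y : T1) = (y' : T1)) : F y - y = F y' - y' := by
  obtain ⟨n, rfl⟩ := coe_eq_iff h
  rw [lift_add_int F hper]
  ring

lemma iter_lift {H : Type*} [Group H] [MulAction H T1] (F : ℝ → ℝ) (g : H)
    (hlift : ∀ x : ℝ, ((F x : ℝ) : T1) = g • (x : T1)) (n : ℕ) (x : ℝ) :
    ((F^[n] x : ℝ) : T1) = g ^ n • (x : T1) := by
  induction n with
  | zero => simp
  | succ k ih =>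
    rw [Function.iterate_succ_apply', hlift, ih, ← mul_smul, ← pow_succ']

lemma eq_of_nat_bound {x : ℝ} {C : ℝ} (h : ∀ n : ℕ, (n : ℝ) * |x| ≤ C) : x = 0 := by
  by_contra hx
  have habs : 0 < |x| := abs_pos.mpr hx
  obtain ⟨n, hn⟩ := exists_nat_gt (C / |x|)
  have h2 := h n
  rw [div_lt_iff₀ habs] at hn
  linarith

/-! ### the key lemma: the mean-integral of the displacement equals the translation number -/

lemma L_eq_tau {H : Type*} [Group H] [MulAction H T1] (μ : InvariantMean H) (g : H)
    (F : ℝ → ℝ) (hm : Monotone F) (hper : ∀ x, F (x + 1) = F x + 1)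
    (hlift : ∀ x : ℝ, ((F x : ℝ) : T1) = g • (x : T1))
    (τ : ℝ) (hτ : ∀ (n : ℕ) (x : ℝ), |F^[n] x - x - n * τ| ≤ 2)
    (c : ℝ) (hc : ∀ y : ℝ, |F y - y| ≤ c) :
    mint μ (-c) c (fun k : H => F (rp (k • (0:T1))) - rp (k • (0:T1))) = τ := by
  have hc0 : 0 ≤ c := le_trans (abs_nonneg _) (hc 0)
  set Φ : H → ℝ := fun k => F (rp (k • (0:T1))) - rp (k • (0:T1)) with hΦ
  set Lv := mint μ (-c) c Φ with hLv
  have hbd : ∀ (n : ℕ) (y : ℝ), |F^[n] y - y| ≤ n * c := by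
    intro n
    induction n with
    | zero => intro y; simp
    | succ k ih =>
      intro y
      have h1 := hc (F^[k] y)
      have h2 := ih y
      rw [Function.iterate_succ_apply']
      push_cast
      rw [abs_le] at h1 h2 ⊢
      constructor <;> nlinarith [hc0]
  have claim : ∀ n : ℕ,
      mint μ (-((n:ℝ) * c)) ((n:ℝ) * c)
        (fun k : H => F^[n] (rp (k • (0:T1))) - rp (k • (0:T1))) = n * Lv := by
    intro n
    induction n with
    | zero =>
      have hfun : (fun k : H => F^[0] (rp (k • (0:T1))) - rp (k • (0:T1)))
          = fun _ : H => (0:ℝ) := by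
        funext k; simp
      rw [hfun]
      push_cast
      rw [zero_mul, neg_zero, mint_const μ (le_refl (0:ℝ)) (le_refl (0:ℝ))]
      ring
    | succ n ih =>
      have hsplit : (fun k : H => F^[n+1] (rp (k • (0:T1))) - rp (k • (0:T1)))
          = fun k : H => Φ (g ^ n * k) + (F^[n] (rp (k • (0:T1))) - rp (k • (0:T1))) := by
        funext k
        have h1 : ((F^[n] (rp (k • (0:T1))) : ℝ) : T1)
            = ((rp ((g ^ n * k) • (0:T1)) : ℝ) : T1) := by
          rw [iter_lift F g hlift, rp_coe, rp_coe, mul_smul]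
        have h2 := disp_congr F hper h1
        rw [Function.iterate_succ_apply']
        simp only [hΦ]
        linarith [h2]
      have hf₁ : ∀ k : H, Φ (g ^ n * k) ∈ Icc (-c) c := by
        intro k
        have := hc (rp ((g ^ n * k) • (0:T1)))
        rw [abs_le] at this
        exact ⟨this.1, this.2⟩
      have hf₂ : ∀ k : H, (F^[n] (rp (k • (0:T1))) - rp (k • (0:T1)))
          ∈ Icc (-((n:ℝ) * c)) ((n:ℝ) * c) := by
        intro k
        have := hbd n (rp (k • (0:T1)))
        rw [abs_le] at this
        exact ⟨this.1, this.2⟩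
      have e1 : -((((n:ℕ)+1:ℕ):ℝ) * c) = (-c) + -((n:ℝ) * c) := by push_cast; ring
      have e2 : ((((n:ℕ)+1:ℕ):ℝ) * c) = c + (n:ℝ) * c := by push_cast; ring
      rw [hsplit, e1, e2,
        mint_add μ (fun k : H => Φ (g ^ n * k))
          (fun k : H => F^[n] (rp (k • (0:T1))) - rp (k • (0:T1))) hf₁ hf₂,
        mint_invariant μ Φ (g ^ n) (-c) c, ih]
      push_cast
      ring
  have est : ∀ n : ℕ, |(n:ℝ) * Lv - (n:ℝ) * τ| ≤ 2 := by
    intro n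
    set Ψ : H → ℝ := fun k : H => F^[n] (rp (k • (0:T1))) - rp (k • (0:T1)) with hΨ
    set M : ℝ := (n:ℝ) * c + |(n:ℝ) * τ| + 2 with hM
    have hnc0 : 0 ≤ (n:ℝ) * c := by positivity
    have habs1 : -((n:ℝ) * τ) ≤ |(n:ℝ) * τ| := neg_le_abs _
    have habs2 : (n:ℝ) * τ ≤ |(n:ℝ) * τ| := le_abs_self _
    have hΨbd : ∀ k, Ψ k ∈ Icc (-((n:ℝ) * c)) ((n:ℝ) * c) := by
      intro k
      have := hbd n (rp (k • (0:T1)))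
      rw [abs_le] at this
      exact ⟨this.1, this.2⟩
    have hind : mint μ (-M) M Ψ = mint μ (-((n:ℝ) * c)) ((n:ℝ) * c) Ψ := by
      refine mint_indep μ Ψ ?_ ?_ (by linarith) hΨbd
      · rw [hM]; linarith [abs_nonneg ((n:ℝ)*τ)]
      · rw [hM]; linarith [abs_nonneg ((n:ℝ)*τ)]
    have hΨτ : ∀ k, ((n:ℝ) * τ - 2 ≤ Ψ k) ∧ (Ψ k ≤ (n:ℝ) * τ + 2) := by
      intro k
      have hτk := hτ n (rp (k • (0:T1)))
      rw [abs_le] at hτk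
      have hΨk : Ψ k = F^[n] (rp (k • (0:T1))) - rp (k • (0:T1)) := rfl
      rw [hΨk]
      constructor <;> [linarith [hτk.1]; linarith [hτk.2]]
    have hup : mint μ (-M) M Ψ ≤ (n:ℝ) * τ + 2 := by
      have h1 : mint μ (-M) M Ψ ≤ mint μ (-M) M (fun _ : H => (n:ℝ) * τ + 2) :=
        mint_mono μ (by rw [hM]; linarith) (fun k => (hΨτ k).2)
      have h2 : mint μ (-M) M (fun _ : H => (n:ℝ) * τ + 2) = (n:ℝ) * τ + 2 :=
        mint_const μ (by rw [hM]; linarith) (by rw [hM]; linarith)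
      linarith
    have hlo : (n:ℝ) * τ - 2 ≤ mint μ (-M) M Ψ := by
      have h1 : mint μ (-M) M (fun _ : H => (n:ℝ) * τ - 2) ≤ mint μ (-M) M Ψ :=
        mint_mono μ (by rw [hM]; linarith) (fun k => (hΨτ k).1)
      have h2 : mint μ (-M) M (fun _ : H => (n:ℝ) * τ - 2) = (n:ℝ) * τ - 2 :=
        mint_const μ (by rw [hM]; linarith) (by rw [hM]; linarith)
      linarith
    have := claim n
    rw [← hind] at this
    rw [abs_le]
    constructor <;> linarith
  have hfinal : Lv - τ = 0 := by
    apply eq_of_nat_bound (C := 2)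
    intro n
    have h := est n
    have e : (n:ℝ) * Lv - (n:ℝ) * τ = (n:ℝ) * (Lv - τ) := by ring
    rw [e, abs_mul, Nat.abs_cast] at h
    exact h
  linarith [hfinal]

end S3

/-- Ghys, Prop. 6.17: for an orientation-preserving action of a
discrete amenable group on the circle, the rotation number map is a group
homomorphism. -/
theorem statement3 (G : Type*) [Group G] [MulAction G T1]
    (hamen : Nonempty (InvariantMean G))
    (hor : OrientationPreservingAction G)
    (ρ : G → T1) (hρ : ∀ g : G, HasRotationNumber (fun x : T1 => g • x) (ρ g)) :
    ∀ g h : G, ρ (g * h) = ρ g + ρ h := by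
  obtain ⟨μ⟩ := hamen
  intro g h
  obtain ⟨F₁, hF₁, hconv₁⟩ := hρ g
  obtain ⟨F₂, hF₂, hconv₂⟩ := hρ h
  obtain ⟨F₃, hF₃, hconv₃⟩ := hρ (g * h)
  obtain ⟨hcont₁, hsm₁, hper₁, hlift₁⟩ := hF₁
  obtain ⟨hcont₂, hsm₂, hper₂, hlift₂⟩ := hF₂
  obtain ⟨hcont₃, hsm₃, hper₃, hlift₃⟩ := hF₃
  have hm₁ := hsm₁.monotone
  have hm₂ := hsm₂.monotone
  have hm₃ := hsm₃.monotone
  obtain ⟨τ₁, hτ₁, htend₁⟩ := S3.exists_tau F₁ hm₁ hper₁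
  obtain ⟨τ₂, hτ₂, htend₂⟩ := S3.exists_tau F₂ hm₂ hper₂
  obtain ⟨τ₃, hτ₃, htend₃⟩ := S3.exists_tau F₃ hm₃ hper₃
  have hρg : ρ g = ((τ₁ : ℝ) : T1) :=
    tendsto_nhds_unique (hconv₁ 0) (((AddCircle.continuous_mk' 1).tendsto τ₁).comp htend₁)
  have hρh : ρ h = ((τ₂ : ℝ) : T1) :=
    tendsto_nhds_unique (hconv₂ 0) (((AddCircle.continuous_mk' 1).tendsto τ₂).comp htend₂)
  have hρgh : ρ (g * h) = ((τ₃ : ℝ) : T1) :=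
    tendsto_nhds_unique (hconv₃ 0) (((AddCircle.continuous_mk' 1).tendsto τ₃).comp htend₃)
  -- the composed lift
  set K : ℝ → ℝ := fun x => F₁ (F₂ x) with hKdef
  have hmK : Monotone K := fun x y hxy => hm₁ (hm₂ hxy)
  have hperK : ∀ x, K (x + 1) = K x + 1 := by
    intro x
    show F₁ (F₂ (x + 1)) = F₁ (F₂ x) + 1
    rw [hper₂, hper₁]
  have hliftK : ∀ x : ℝ, ((K x : ℝ) : T1) = (g * h) • (x : T1) := by
    intro x
    show ((F₁ (F₂ x) : ℝ) : T1) = (g * h) • (x : T1)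
    rw [hlift₁ (F₂ x), hlift₂ x, mul_smul]
  obtain ⟨τK, hτK, _⟩ := S3.exists_tau K hmK hperK
  -- F₃ differs from K by an integer
  have hint : ∀ x : ℝ, ∃ n : ℤ, F₃ x - K x = n := by
    intro x
    have h1 : ((F₃ x : ℝ) : T1) = ((K x : ℝ) : T1) := (hlift₃ x).trans (hliftK x).symm
    obtain ⟨n, hn⟩ := S3.coe_eq_iff h1
    exact ⟨-n, by push_cast; linarith⟩
  obtain ⟨n₀, hn₀⟩ := hint 0
  have hdK : Continuous K := hcont₁.comp hcont₂
  have hconstd : ∀ x : ℝ, F₃ x - K x = (n₀ : ℝ) := by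
    intro x
    obtain ⟨nx, hnx⟩ := hint x
    by_contra hne
    have hnen : nx ≠ n₀ := by
      rintro rfl
      exact hne hnx
    have hIVT := intermediate_value_uIcc (a := x) (b := (0:ℝ))
      (f := fun y => F₃ y - K y) (hcont₃.sub hdK).continuousOn
    rcases lt_or_gt_of_ne hnen with hlt | hlt
    · have hsep : (nx : ℝ) + 1 ≤ (n₀ : ℝ) := by
        exact_mod_cast Int.lt_iff_add_one_le.mp hlt
      have hv : ((nx : ℝ) + 1/2) ∈ uIcc (F₃ x - K x) (F₃ 0 - K 0) := by
        rw [Set.mem_uIcc, hnx, hn₀]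
        left
        constructor <;> linarith
      obtain ⟨z, _, hz⟩ := hIVT hv
      obtain ⟨nz, hnz⟩ := hint z
      have hz' : F₃ z - K z = (nx : ℝ) + 1/2 := hz
      rw [hnz] at hz'
      have h2 : ((2 * nz : ℤ) : ℝ) = ((2 * nx + 1 : ℤ) : ℝ) := by push_cast; linarith
      have h3 : (2 * nz : ℤ) = 2 * nx + 1 := by exact_mod_cast h2
      omega
    · have hsep : (n₀ : ℝ) + 1 ≤ (nx : ℝ) := by
        exact_mod_cast Int.lt_iff_add_one_le.mp hlt
      have hv : ((n₀ : ℝ) + 1/2) ∈ uIcc (F₃ x - K x) (F₃ 0 - K 0) := by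
        rw [Set.mem_uIcc, hnx, hn₀]
        right
        constructor <;> linarith
      obtain ⟨z, _, hz⟩ := hIVT hv
      obtain ⟨nz, hnz⟩ := hint z
      have hz' : F₃ z - K z = (n₀ : ℝ) + 1/2 := hz
      rw [hnz] at hz'
      have h2 : ((2 * nz : ℤ) : ℝ) = ((2 * n₀ + 1 : ℤ) : ℝ) := by push_cast; linarith
      have h3 : (2 * nz : ℤ) = 2 * n₀ + 1 := by exact_mod_cast h2
      omega
  have hF₃eq : ∀ x : ℝ, F₃ x = K x + (n₀ : ℝ) := by
    intro x
    have := hconstd x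
    linarith
  have hiter : ∀ (m : ℕ) (x : ℝ), F₃^[m] x = K^[m] x + (m : ℝ) * (n₀ : ℝ) := by
    intro m
    induction m with
    | zero => intro x; simp
    | succ j ih =>
      intro x
      have hcast : (K^[j] x) + (j : ℝ) * (n₀ : ℝ) = K^[j] x + (((j : ℤ) * n₀ : ℤ) : ℝ) := by
        push_cast; ring
      rw [Function.iterate_succ_apply', Function.iterate_succ_apply', hF₃eq, ih, hcast,
        S3.lift_add_int K hperK]
      push_cast
      ring
  have hτ₃K : τ₃ = τK + (n₀ : ℝ) := by
    have hz : τ₃ - (τK + (n₀ : ℝ)) = 0 := by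
      apply S3.eq_of_nat_bound (C := 4)
      intro m
      have h3 := hτ₃ m 0
      have hKe := hτK m 0
      have hit := hiter m 0
      simp only [sub_zero] at h3 hKe
      have e : (m : ℝ) * |τ₃ - (τK + (n₀:ℝ))| = |(m:ℝ) * (τ₃ - (τK + (n₀:ℝ)))| := by
        rw [abs_mul, Nat.abs_cast]
      rw [e]
      rw [abs_le] at h3 hKe ⊢
      constructor <;> [nlinarith [h3.1, hKe.2, hit]; nlinarith [h3.2, hKe.1, hit]]
    linarith
  -- displacement bounds
  set c₁ : ℝ := |F₁ 0| + 1 with hc₁def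
  set c₂ : ℝ := |F₂ 0| + 1 with hc₂def
  have hc₁ : ∀ y : ℝ, |F₁ y - y| ≤ c₁ := by
    intro y
    have h1 := S3.disp_bound F₁ hm₁ hper₁ 0 y
    have h2 := S3.disp_bound F₁ hm₁ hper₁ y 0
    simp only [sub_zero] at h1 h2
    rw [abs_le]
    have ha1 := le_abs_self (F₁ 0)
    have ha2 := neg_abs_le (F₁ 0)
    constructor <;> [rw [hc₁def]; rw [hc₁def]] <;> [linarith; linarith]
  have hc₂ : ∀ y : ℝ, |F₂ y - y| ≤ c₂ := by
    intro y
    have h1 := S3.disp_bound F₂ hm₂ hper₂ 0 y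
    have h2 := S3.disp_bound F₂ hm₂ hper₂ y 0
    simp only [sub_zero] at h1 h2
    rw [abs_le]
    have ha1 := le_abs_self (F₂ 0)
    have ha2 := neg_abs_le (F₂ 0)
    constructor <;> [rw [hc₂def]; rw [hc₂def]] <;> [linarith; linarith]
  have hcK : ∀ y : ℝ, |K y - y| ≤ c₁ + c₂ := by
    intro y
    have h1 := hc₁ (F₂ y)
    have h2 := hc₂ y
    have hKy : K y = F₁ (F₂ y) := rfl
    rw [abs_le] at h1 h2 ⊢
    rw [hKy]
    constructor <;> linarith [h1.1, h1.2, h2.1, h2.2]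
  -- the mean computation
  have hL₁ := S3.L_eq_tau μ g F₁ hm₁ hper₁ hlift₁ τ₁ hτ₁ c₁ hc₁
  have hL₂ := S3.L_eq_tau μ h F₂ hm₂ hper₂ hlift₂ τ₂ hτ₂ c₂ hc₂
  have hLK := S3.L_eq_tau μ (g * h) K hmK hperK hliftK τK hτK (c₁ + c₂) hcK
  have hb₁ : ∀ k : G, (F₁ (S3.rp ((h * k) • (0:T1))) - S3.rp ((h * k) • (0:T1)))
      ∈ Set.Icc (-c₁) c₁ := by
    intro k
    have := hc₁ (S3.rp ((h * k) • (0:T1)))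
    rw [abs_le] at this
    exact ⟨this.1, this.2⟩
  have hb₂ : ∀ k : G, (F₂ (S3.rp (k • (0:T1))) - S3.rp (k • (0:T1)))
      ∈ Set.Icc (-c₂) c₂ := by
    intro k
    have := hc₂ (S3.rp (k • (0:T1)))
    rw [abs_le] at this
    exact ⟨this.1, this.2⟩
  have hmadd := S3.mint_add μ
    (fun k : G => F₁ (S3.rp ((h * k) • (0:T1))) - S3.rp ((h * k) • (0:T1)))
    (fun k : G => F₂ (S3.rp (k • (0:T1))) - S3.rp (k • (0:T1))) hb₁ hb₂
  have hinv := S3.mint_invariant μ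
    (fun k : G => F₁ (S3.rp (k • (0:T1))) - S3.rp (k • (0:T1))) h (-c₁) c₁
  have hdec : (fun k : G => K (S3.rp (k • (0:T1))) - S3.rp (k • (0:T1)))
      = fun k : G => (F₁ (S3.rp ((h * k) • (0:T1))) - S3.rp ((h * k) • (0:T1)))
          + (F₂ (S3.rp (k • (0:T1))) - S3.rp (k • (0:T1))) := by
    funext k
    have h1 : ((F₂ (S3.rp (k • (0:T1))) : ℝ) : T1)
        = ((S3.rp ((h * k) • (0:T1)) : ℝ) : T1) := by
      rw [hlift₂, S3.rp_coe, S3.rp_coe, mul_smul]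
    have h2 := S3.disp_congr F₁ hper₁ h1
    have hKy : K (S3.rp (k • (0:T1))) = F₁ (F₂ (S3.rp (k • (0:T1)))) := rfl
    rw [hKy]
    linarith [h2]
  have hCKeq : S3.mint μ (-(c₁ + c₂)) (c₁ + c₂)
      (fun k : G => K (S3.rp (k • (0:T1))) - S3.rp (k • (0:T1)))
      = S3.mint μ (-c₁ + -c₂) (c₁ + c₂)
        (fun k : G => (F₁ (S3.rp ((h * k) • (0:T1))) - S3.rp ((h * k) • (0:T1)))
          + (F₂ (S3.rp (k • (0:T1))) - S3.rp (k • (0:T1)))) := by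
    rw [hdec, show -(c₁ + c₂) = -c₁ + -c₂ from by ring]
  have hKsum : τK = τ₁ + τ₂ := by
    rw [← hLK, ← hL₁, ← hL₂, hCKeq, hmadd, hinv]
  rw [hρgh, hρg, hρh, hτ₃K, hKsum]
  calc (((τ₁ + τ₂) + (n₀ : ℝ) : ℝ) : T1) = ((τ₁ + τ₂ : ℝ) : T1) := S3.coe_add_int _ n₀
    _ = ((τ₁ : ℝ) : T1) + ((τ₂ : ℝ) : T1) := rfl
end
end

section
/- Let G be a countably infinite discrete abelian group with a free Denjoy action on 𝕋 with unique minimal set Y. Then the restricted action of G on the open set 𝕋 \ Y is free and proper: for every compact K ⊆ 𝕋 \ Y, the set {g ∈ G : gK ∩ K ≠ ∅} is finite. -/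
open MeasureTheory Topology Filter Set Function

noncomputable section

variable (G : Type*) [Group G] [MulAction G T1]

private lemma coe_int_add' (x : ℝ) (n : ℤ) : ((x + n : ℝ) : T1) = (x : T1) := by
  have h1 : ((n : ℝ) : T1) = 0 := by
    have h2 : ((n • (1 : ℝ) : ℝ) : T1) = n • ((1 : ℝ) : T1) := AddCircle.coe_zsmul 1
    have h3 : ((1 : ℝ) : T1) = 0 := AddCircle.coe_period 1
    rw [h3, smul_zero] at h2
    simpa using h2
  rw [AddCircle.coe_add, h1, add_zero]

private lemma lift_add_int' {F : ℝ → ℝ} (hp : ∀ x, F (x + 1) = F x + 1) (x : ℝ) (n : ℤ) :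
    F (x + n) = F x + n := by
  induction n using Int.induction_on with
  | zero => simp
  | succ k ih =>
      have h1 : x + ((k : ℤ) + 1 : ℤ) = (x + (k : ℤ)) + 1 := by push_cast; ring
      rw [h1, hp, ih]; push_cast; ring
  | pred k ih =>
      have h1 : x + ((-(k : ℤ)) : ℝ) = (x + ((-(k : ℤ) - 1 : ℤ) : ℝ)) + 1 := by push_cast; ring
      rw [show ((-(k : ℤ) : ℤ) : ℝ) = ((-(k:ℤ)) : ℝ) from by push_cast; ring] at ih
      rw [h1, hp] at ih
      have : F (x + ((-(k:ℤ) - 1 : ℤ) : ℝ)) = F x + ((-(k:ℤ) - 1 : ℤ) : ℝ) := by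
        push_cast at ih ⊢; linarith
      simpa using this

private lemma lift_surj' {F : ℝ → ℝ} (hc : Continuous F) (hm : StrictMono F)
    (hp : ∀ x, F (x + 1) = F x + 1) : Surjective F := by
  apply Continuous.surjective hc
  · apply tendsto_atTop_atTop_of_monotone hm.monotone
    intro b
    refine ⟨(⌈b - F 0⌉ : ℝ), ?_⟩
    have h1 : F ((0 : ℝ) + (⌈b - F 0⌉ : ℤ)) = F 0 + (⌈b - F 0⌉ : ℤ) := lift_add_int' hp 0 _
    have h2 := Int.le_ceil (b - F 0)
    simp only [zero_add] at h1
    rw [h1]; linarith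
  · apply tendsto_atBot_atBot_of_monotone hm.monotone
    intro b
    refine ⟨(-⌈F 0 - b⌉ : ℝ), ?_⟩
    have h1 : F ((0 : ℝ) + ((-⌈F 0 - b⌉ : ℤ) : ℝ)) = F 0 + ((-⌈F 0 - b⌉ : ℤ) : ℝ) :=
      lift_add_int' hp 0 _
    have h2 := Int.le_ceil (F 0 - b)
    simp only [zero_add] at h1
    push_cast at h1
    rw [h1]; push_cast; linarith

private lemma finite_of_separated' {A : Set ℝ} {ε : ℝ} (hε : 0 < ε)
    (hb : ∀ x ∈ A, |x| ≤ 1) (hsep : ∀ x ∈ A, ∀ y ∈ A, x ≠ y → ε ≤ |x - y|) : A.Finite := by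
  have hinj : InjOn (fun x => ⌊x / ε⌋) A := by
    intro x hx y hy hxy
    by_contra hne
    have h1 : |x / ε - y / ε| < 1 := by
      simp only at hxy
      rw [abs_sub_lt_iff]
      constructor
      · calc x / ε - y / ε < (⌊x / ε⌋ + 1) - ⌊y / ε⌋ := by
              have := Int.lt_floor_add_one (x / ε)
              have := Int.floor_le (y / ε)
              push_cast; linarith
          _ = 1 := by rw [hxy]; push_cast; ring
      · calc y / ε - x / ε < (⌊y / ε⌋ + 1) - ⌊x / ε⌋ := by
              have := Int.lt_floor_add_one (y / ε)
              have := Int.floor_le (x / ε)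
              push_cast; linarith
          _ = 1 := by rw [hxy]; push_cast; ring
    have h2 : |x - y| < ε := by
      have : |x - y| / ε < 1 := by
        rw [← abs_of_pos hε, ← abs_div]
        convert h1 using 2
        exacts [rfl, rfl, sub_div x y ε]
      calc |x - y| = |x - y| / ε * ε := by field_simp
        _ < 1 * ε := by exact mul_lt_mul_of_pos_right this hε
        _ = ε := one_mul ε
    exact absurd (hsep x hx y hy hne) (not_le.mpr h2)
  have himg : (fun x => ⌊x / ε⌋) '' A ⊆ Icc ⌊(-1) / ε⌋ ⌊1 / ε⌋ := by
    rintro - ⟨x, hx, rfl⟩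
    have hx1 := hb x hx
    rw [abs_le] at hx1
    exact ⟨Int.floor_mono (div_le_div_of_nonneg_right hx1.1 hε.le),
      Int.floor_mono (div_le_div_of_nonneg_right hx1.2 hε.le)⟩
  exact Set.Finite.of_finite_image ((Set.finite_Icc _ _).subset himg) hinj

/-- for a free Denjoy action of a countably infinite discrete abelian
group with unique minimal set `Y`, the restricted action of `G` on `𝕋 \ Y` is free and
proper: every compact `K ⊆ 𝕋 \ Y` meets only finitely many of its translates. -/
theorem statement7 (G : Type*) [CommGroup G] [Countable G] [Infinite G] [MulAction G T1]
    (hD : IsDenjoy G) (hfree : FreeAction G)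
    (Y : Set T1) (hY : IsMinimalSet G Y)
    (hYuniq : ∀ Z : Set T1, IsMinimalSet G Z → Z = Y) (hYproper : Y ≠ Set.univ) :
    (∀ (g : G), ∀ x ∈ Yᶜ, g • x = x → g = 1) ∧
    ∀ K : Set T1, K ⊆ Yᶜ → IsCompact K →
      {g : G | ((fun x : T1 => g • x) '' K ∩ K).Nonempty}.Finite := by
  obtain ⟨⟨hcont, hOP⟩, -, -⟩ := hD
  obtain ⟨hYne, hYcl, hYinv, -⟩ := hY
  refine ⟨fun g x _ h => hfree g x h, ?_⟩
  intro K hK hKcomp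
  rcases eq_empty_or_nonempty K with rfl | hKne
  · convert Set.finite_empty (α := G)
    ext g; simp
  choose F hF using hOP
  have hFc : ∀ g, Continuous (F g) := fun g => (hF g).1
  have hFm : ∀ g, StrictMono (F g) := fun g => (hF g).2.1
  have hFp : ∀ g x, F g (x + 1) = F g x + 1 := fun g => (hF g).2.2.1
  have hFcoe : ∀ (g : G) (x : ℝ), ((F g x : ℝ) : T1) = g • ((x : ℝ) : T1) :=
    fun g => (hF g).2.2.2
  have hFsurj : ∀ g, Surjective (F g) := fun g => lift_surj' (hFc g) (hFm g) (hFp g)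
  set π : ℝ → T1 := fun t : ℝ => (t : T1) with hπ
  have hπcont : Continuous π := AddCircle.continuous_mk' 1
  have hπsurj : Surjective π := QuotientAddGroup.mk_surjective
  set W : Set ℝ := π ⁻¹' Y with hWdef
  have hWcl : IsClosed W := hYcl.preimage hπcont
  have hWper : ∀ t ∈ W, ∀ n : ℤ, t + n ∈ W := by
    intro t ht n
    show π (t + n) ∈ Y
    have : π (t + n) = π t := coe_int_add' t n
    rw [this]; exact ht
  have hWne : W.Nonempty := by
    obtain ⟨y, hy⟩ := hYne
    obtain ⟨t, rfl⟩ := hπsurj y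
    exact ⟨t, hy⟩
  have hFW : ∀ (g : G), ∀ x : ℝ, x ∈ W ↔ F g x ∈ W := by
    intro g x
    constructor
    · intro hx
      show π (F g x) ∈ Y
      rw [show π (F g x) = g • π x from hFcoe g x]
      exact hYinv g _ hx
    · intro hx
      have h1 : g • π x ∈ Y := by rw [← hFcoe g x]; exact hx
      have h2 := hYinv g⁻¹ _ h1
      rwa [inv_smul_smul] at h2
  have hWnear : ∀ t : ℝ, ∃ w ∈ W, t - 1 < w ∧ w ≤ t := by
    intro t
    obtain ⟨w₀, hw₀⟩ := hWne
    refine ⟨w₀ + (-⌈w₀ - t⌉ : ℤ), hWper _ hw₀ _, ?_, ?_⟩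
    · have := Int.ceil_lt_add_one (w₀ - t); push_cast; linarith
    · have := Int.le_ceil (w₀ - t); push_cast; linarith
  set a : ℝ → ℝ := fun t => sSup (W ∩ Iic t) with ha
  have hane : ∀ t, (W ∩ Iic t).Nonempty := by
    intro t
    obtain ⟨w, hw, _, hle⟩ := hWnear t
    exact ⟨w, hw, hle⟩
  have habd : ∀ t, BddAbove (W ∩ Iic t) := fun t => ⟨t, fun y hy => hy.2⟩
  have haW : ∀ t, a t ∈ W ∧ a t ≤ t := by
    intro t
    have := (hWcl.inter isClosed_Iic).csSup_mem (hane t) (habd t)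
    exact this
  have hle_a : ∀ t, ∀ w ∈ W, w ≤ t → w ≤ a t := fun t w hw hle => le_csSup (habd t) ⟨hw, hle⟩
  have hmap : ∀ (Fq : ℝ → ℝ), Continuous Fq → StrictMono Fq → Surjective Fq →
      (∀ x, x ∈ W ↔ Fq x ∈ W) → ∀ t, Fq (a t) = a (Fq t) := by
    intro Fq hc hm hs hWiff t
    have himg : Fq '' (W ∩ Iic t) = W ∩ Iic (Fq t) := by
      ext y
      constructor
      · rintro ⟨x, ⟨hxW, hxt⟩, rfl⟩
        exact ⟨(hWiff x).1 hxW, hm.monotone hxt⟩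
      · rintro ⟨hyW, hyt⟩
        obtain ⟨x, rfl⟩ := hs y
        exact ⟨x, ⟨(hWiff x).2 hyW, (hm.le_iff_le).1 hyt⟩, rfl⟩
    calc Fq (sSup (W ∩ Iic t)) = sSup (Fq '' (W ∩ Iic t)) :=
          hm.monotone.map_csSup_of_continuousAt hc.continuousAt (hane t) (habd t)
      _ = sSup (W ∩ Iic (Fq t)) := by rw [himg]
  have haper : ∀ (t : ℝ) (n : ℤ), a (t + n) = a t + n := by
    intro t n
    have := hmap (fun x => x + (n : ℝ)) (by continuity)
      (fun x y h => by simpa using h)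
      (fun y => ⟨y - n, by ring⟩)
      (fun x => ⟨fun h => hWper x h n, fun h => by
        have := hWper _ h (-n)
        have h2 : x + (n : ℝ) + ((-n : ℤ) : ℝ) = x := by push_cast; ring
        rwa [h2] at this⟩) t
    exact this.symm
  have hFa : ∀ (g : G) (t : ℝ), F g (a t) = a (F g t) :=
    fun g t => hmap (F g) (hFc g) (hFm g) (hFsurj g) (hFW g) t
  -- the compact set of lifts and the separation constant δ
  set Kr : Set ℝ := π ⁻¹' K with hKr
  have hKrcl : IsClosed Kr := hKcomp.isClosed.preimage hπcont
  have hKrW : ∀ t ∈ Kr, t ∉ W := by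
    intro t ht hW
    exact hK ht hW
  have hKrper : ∀ t ∈ Kr, ∀ n : ℤ, t + n ∈ Kr := by
    intro t ht n
    show π (t + n) ∈ K
    rw [show π (t + n) = π t from coe_int_add' t n]
    exact ht
  have hfract : ∀ t : ℝ, π (Int.fract t) = π t := by
    intro t
    have h1 : Int.fract t + (⌊t⌋ : ℤ) = t := Int.fract_add_floor t
    conv_rhs => rw [← h1]
    exact (coe_int_add' (Int.fract t) ⌊t⌋).symm
  set K' : Set ℝ := Kr ∩ Icc (0 : ℝ) 1 with hK'
  have hK'comp : IsCompact K' := isCompact_Icc.inter_left hKrcl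
  have hK'ne : K'.Nonempty := by
    obtain ⟨x, hx⟩ := hKne
    obtain ⟨t, rfl⟩ := hπsurj x
    refine ⟨Int.fract t, ?_, ⟨Int.fract_nonneg t, (Int.fract_lt_one t).le⟩⟩
    show π (Int.fract t) ∈ K
    rw [hfract]; exact hx
  obtain ⟨t₀, ht₀, hmin⟩ := hK'comp.exists_isMinOn hK'ne
    ((Metric.continuous_infDist_pt W).continuousOn)
  set δ : ℝ := Metric.infDist t₀ W with hδdef
  have hδpos : 0 < δ := by
    have : t₀ ∉ W := hKrW t₀ ht₀.1
    exact (hWcl.notMem_iff_infDist_pos hWne).1 this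
  have hδ : ∀ t ∈ Kr, ∀ w ∈ W, δ ≤ |t - w| := by
    intro t ht w hw
    have h1 : Int.fract t ∈ K' := by
      refine ⟨?_, ⟨Int.fract_nonneg t, (Int.fract_lt_one t).le⟩⟩
      show π (Int.fract t) ∈ K
      rw [hfract]; exact ht
    have h2 : w + (-⌊t⌋ : ℤ) ∈ W := hWper w hw _
    calc δ ≤ Metric.infDist (Int.fract t) W := hmin h1
      _ ≤ dist (Int.fract t) (w + (-⌊t⌋ : ℤ)) := Metric.infDist_le_dist_of_mem h2
      _ = |t - w| := by
          rw [Real.dist_eq]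
          congr 1
          rw [← Int.self_sub_floor]
          push_cast
          ring
  have hsepKey : ∀ s ∈ Kr, ∀ s' ∈ Kr, a s < a s' → 2 * δ ≤ a s' - a s := by
    intro s hs s' hs' hlt
    have haW' := (haW s').1
    have h1 : s < a s' := by
      by_contra hcon
      push_neg at hcon
      exact absurd (hle_a s _ haW' hcon) (not_le.mpr hlt)
    have h2 : δ ≤ s - a s := by
      have := hδ s hs (a s) (haW s).1
      rwa [abs_of_nonneg (by linarith [(haW s).2])] at this
    have h3 : δ ≤ a s' - s := by
      have := hδ s hs (a s') haW'
      rwa [abs_of_nonpos (by linarith), neg_sub] at this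
    linarith
  set A : Set ℝ := a '' (Kr ∩ Ico (0 : ℝ) 1) with hA
  have hAfin : A.Finite := by
    apply finite_of_separated' (by linarith : (0 : ℝ) < 2 * δ)
    · rintro - ⟨t, ⟨htK, ht0, ht1⟩, rfl⟩
      have h1 := (haW t).2
      have h2 : t - 1 < a t := by
        obtain ⟨w, hw, hlt, hle⟩ := hWnear t
        exact lt_of_lt_of_le hlt (hle_a t w hw hle)
      rw [abs_le]
      constructor <;> linarith
    · rintro - ⟨t, ⟨htK, _⟩, rfl⟩ - ⟨t', ⟨htK', _⟩, rfl⟩ hne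
      rcases lt_or_gt_of_ne hne with h | h
      · rw [abs_of_nonpos (by linarith), neg_sub]
        exact hsepKey t htK t' htK' h
      · rw [abs_of_nonneg (by linarith)]
        exact hsepKey t' htK' t htK h
  set P : Set T1 := π '' A with hP
  have hPfin : P.Finite := hAfin.image π
  have hmemP : ∀ t ∈ Kr, π (a t) ∈ P := by
    intro t ht
    have h1 : Int.fract t ∈ Kr ∩ Ico (0 : ℝ) 1 := by
      refine ⟨?_, ⟨Int.fract_nonneg t, Int.fract_lt_one t⟩⟩
      show π (Int.fract t) ∈ K
      rw [hfract]; exact ht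
    refine ⟨a (Int.fract t), ⟨Int.fract t, h1, rfl⟩, ?_⟩
    have h2 : a t = a (Int.fract t) + (⌊t⌋ : ℤ) := by
      conv_lhs => rw [← Int.fract_add_floor t]
      exact haper (Int.fract t) ⌊t⌋
    show π (a (Int.fract t)) = π (a t)
    rw [h2]
    exact (coe_int_add' (a (Int.fract t)) ⌊t⌋).symm
  have hsub : {g : G | ((fun x : T1 => g • x) '' K ∩ K).Nonempty} ⊆
      ⋃ p ∈ P, ⋃ q ∈ P, {g : G | g • p = q} := by
    intro g hg
    obtain ⟨y, ⟨x, hxK, rfl⟩, hgxK⟩ := hg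
    obtain ⟨t, rfl⟩ := hπsurj x
    have htK : t ∈ Kr := hxK
    have hFtK : F g t ∈ Kr := by
      show π (F g t) ∈ K
      rw [show π (F g t) = g • π t from hFcoe g t]
      exact hgxK
    refine mem_biUnion (hmemP t htK) (mem_biUnion (hmemP (F g t) hFtK) ?_)
    show g • π (a t) = π (a (F g t))
    rw [← hFcoe g (a t), hFa g t]
  refine Set.Finite.subset ?_ hsub
  refine hPfin.biUnion fun p _ => hPfin.biUnion fun q _ => ?_
  apply Set.Subsingleton.finite
  intro g hg h hh
  simp only [mem_setOf_eq] at hg hh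
  have h1 : (h⁻¹ * g) • p = p := by
    rw [mul_smul, hg, ← hh, inv_smul_smul]
  have h2 := hfree _ _ h1
  have : h⁻¹ * g = 1 := h2
  exact (inv_mul_eq_one.mp this).symm
end
end

section
/- Let G ↷ 𝕋 be a Denjoy action of a countably infinite discrete abelian group with unique invariant probability measure μ and injective rotation number homomorphism ρ : G → 𝕋. Then for every g ∈ G and every x ∈ 𝕋, the measure of the positively-oriented arc (x, gx] equals ρ(g); in particular it does not depend on x. -/
open MeasureTheory Topology Filter Set Function

noncomputable section

variable (G : Type*) [Group G] [MulAction G T1]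

/-- The representative in `[0,1)` of a point of the circle. -/
def repIco (y : T1) : ℝ := ((AddCircle.equivIco 1 0 y : Set.Ico (0:ℝ) (0 + 1)) : ℝ)


namespace S13
local notation "q" => repIco

lemma q_coe (s : ℝ) : q ((s : ℝ) : T1) = Int.fract s := by
  unfold repIco; rw [AddCircle.coe_equivIco_mk_apply]; simp

lemma q_mem (z : T1) : q z ∈ Ico (0:ℝ) 1 := by
  have := (AddCircle.equivIco 1 0 z).2; simpa [repIco] using this

lemma coe_q (z : T1) : ((q z : ℝ) : T1) = z := (AddCircle.equivIco 1 0).symm_apply_apply z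

lemma q_zero : q (0 : T1) = 0 := by
  have : ((0:ℝ) : T1) = 0 := by norm_cast
  rw [← this, q_coe]; simp

lemma q_eq_zero_iff {z : T1} : q z = 0 ↔ z = 0 := by
  constructor
  · intro h; have := coe_q z; rw [h] at this; rw [← this]; norm_cast
  · rintro rfl; exact q_zero

/-- the arc (x, x + t] -/
def B (x : T1) (t : ℝ) : Set T1 := {z | q (z - x) ∈ Ioc 0 t}

lemma measurableSet_B (x : T1) (t : ℝ) : MeasurableSet (B x t) := by
  have hq : Measurable q := by
    have h := (AddCircle.measurableEquivIco (T := (1:ℝ)) (a := 0)).measurable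
    exact measurable_subtype_coe.comp h
  have : Measurable fun z : T1 => q (z - x) := hq.comp (measurable_id.sub_const x)
  exact this measurableSet_Ioc

lemma B_zero (x : T1) : B x 0 = ∅ := by
  ext z; simp [B]

lemma B_eq_image (x : T1) {t : ℝ} (ht : t < 1) :
    (fun u : ℝ => x + (u : T1)) '' Ioc 0 t = B x t := by
  ext z
  constructor
  · rintro ⟨u, hu, rfl⟩
    have h01 : u ∈ Ico (0:ℝ) 1 := ⟨hu.1.le, lt_of_le_of_lt hu.2 ht⟩
    have : (x + (u:T1)) - x = ((u:ℝ) : T1) := by abel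
    simp only [B, mem_setOf_eq, this, q_coe]
    rw [Int.fract_eq_self.mpr ⟨h01.1, h01.2⟩]
    exact hu
  · intro hz
    refine ⟨q (z - x), hz, ?_⟩
    have h := coe_q (z - x)
    show x + ((q (z-x) : ℝ) : T1) = z
    rw [h]; abel


lemma q_sub (u v : T1) : q (u - v) = Int.fract (q u - q v) := by
  have h1 : ((q u - q v : ℝ) : T1) = (((q u : ℝ) : T1)) - (((q v : ℝ) : T1)) := by
    exact_mod_cast rfl
  have h2 : u - v = ((q u - q v : ℝ) : T1) := by rw [h1, coe_q, coe_q]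
  rw [h2, q_coe]

lemma q_add (u v : T1) : q (u + v) = Int.fract (q u + q v) := by
  have h1 : ((q u + q v : ℝ) : T1) = (((q u : ℝ) : T1)) + (((q v : ℝ) : T1)) := by
    exact_mod_cast rfl
  have h2 : u + v = ((q u + q v : ℝ) : T1) := by rw [h1, coe_q, coe_q]
  rw [h2, q_coe]

lemma fract_cases {a t : ℝ} (ha : a ∈ Ico (0:ℝ) 1) (ht : t ∈ Ico (0:ℝ) 1) :
    (t ≤ a ∧ Int.fract (a - t) = a - t) ∨ (a < t ∧ Int.fract (a - t) = a - t + 1) := by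
  rcases le_or_gt t a with h | h
  · exact Or.inl ⟨h, Int.fract_eq_self.mpr ⟨by linarith [ha.1, ht.1], by linarith [ha.2, ht.1]⟩⟩
  · refine Or.inr ⟨h, ?_⟩
    have h1 : Int.fract (a - t) = Int.fract (a - t + 1) := by
      rw [show a - t + 1 = (a - t) + ((1:ℤ):ℝ) by push_cast; ring, Int.fract_add_intCast]
    rw [h1, Int.fract_eq_self.mpr ⟨by linarith [ha.1, ht.2], by linarith⟩]

lemma q_sum_decomp (x y z : T1) :
    q (z - x) = Int.fract (q (y - x) + q (z - y)) := by
  have h : z - x = (y - x) + (z - y) := by abel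
  rw [h, q_add, add_comm]

lemma mem_B {x : T1} {t : ℝ} {w : T1} : w ∈ B x t ↔ 0 < q (w - x) ∧ q (w - x) ≤ t := Iff.rfl

lemma hb (x y w : T1) : q (w - y) = Int.fract (q (w - x) - q (y - x)) := by
  have h : w - y = (w - x) - (y - x) := by abel
  rw [h, q_sub]

lemma arc_nowrap (x y z : T1) (h : q (y - x) + q (z - y) < 1) :
    Disjoint (B x (q (y - x))) (B y (q (z - y))) ∧
      B x (q (y - x)) ∪ B y (q (z - y)) = B x (q (z - x)) := by
  set t1 := q (y - x) with ht1def
  set t2 := q (z - y) with ht2def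
  have ht1 := q_mem (y - x); have ht2 := q_mem (z - y)
  have ht3 : q (z - x) = t1 + t2 := by
    rw [q_sum_decomp x y z, Int.fract_eq_self.mpr ⟨by linarith [ht1.1, ht2.1], h⟩]
  constructor
  · rw [Set.disjoint_left]
    intro w hw1 hw2
    rw [mem_B] at hw1 hw2
    have ha := q_mem (w - x)
    rw [hb x y w] at hw2
    rcases fract_cases ha ht1 with ⟨hle, hf⟩ | ⟨hlt, hf⟩
    · rw [hf] at hw2; linarith [hw1.2, hw2.1]
    · rw [hf] at hw2; linarith [hw2.2, ha.1]
  · ext w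
    rw [mem_union, mem_B, mem_B, mem_B, ht3, hb x y w]
    have ha := q_mem (w - x)
    rcases fract_cases ha ht1 with ⟨hle, hf⟩ | ⟨hlt, hf⟩
    · rw [hf]
      constructor
      · rintro (⟨h1, h2⟩ | ⟨h1, h2⟩)
        · exact ⟨h1, by linarith [ht2.1]⟩
        · exact ⟨by linarith [ht1.1], by linarith⟩
      · rintro ⟨h1, h2⟩
        rcases le_or_gt (q (w - x)) t1 with h3 | h3
        · exact Or.inl ⟨h1, h3⟩
        · exact Or.inr ⟨by linarith, by linarith⟩
    · rw [hf]
      constructor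
      · rintro (⟨h1, h2⟩ | ⟨h1, h2⟩)
        · exact ⟨h1, by linarith [ht2.1]⟩
        · linarith [ha.1]
      · rintro ⟨h1, h2⟩
        exact Or.inl ⟨h1, by linarith⟩

lemma arc_wrap (x y z : T1) (h : 1 ≤ q (y - x) + q (z - y)) :
    B x (q (y - x)) ∪ B y (q (z - y)) = univ ∧
      B x (q (y - x)) ∩ B y (q (z - y)) = B x (q (z - x)) := by
  have ht1 := q_mem (y - x); have ht2 := q_mem (z - y)
  set t1 := q (y - x) with ht1def
  set t2 := q (z - y) with ht2def
  obtain ⟨ht1a, ht1b⟩ := ht1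
  obtain ⟨ht2a, ht2b⟩ := ht2
  have ht1pos : 0 < t1 := by linarith
  have ht3 : q (z - x) = t1 + t2 - 1 := by
    have h1 : Int.fract (t1 + t2) = Int.fract (t1 + t2 - ((1:ℤ):ℝ)) := (Int.fract_sub_intCast _ _).symm
    rw [q_sum_decomp x y z, h1]
    have hm : (0:ℝ) ≤ t1 + t2 - 1 ∧ t1 + t2 - 1 < 1 := ⟨by linarith, by linarith⟩
    have h2 := Int.fract_eq_self.mpr hm
    norm_num at h2 ⊢
    exact h2
  constructor
  · ext w
    simp only [mem_union, mem_univ, iff_true]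
    rw [mem_B, mem_B, hb x y w]
    have ha := q_mem (w - x)
    rcases fract_cases ha ⟨ht1a, ht1b⟩ with ⟨hle, hf⟩ | ⟨hlt, hf⟩
    · rw [hf]
      rcases eq_or_lt_of_le hle with heq | hlt2
      · exact Or.inl ⟨by linarith, le_refl _ |>.trans (by linarith)⟩
      · exact Or.inr ⟨by linarith, by linarith [ha.2]⟩
    · rw [hf]
      rcases eq_or_lt_of_le ha.1 with heq | hpos
      · exact Or.inr ⟨by linarith, by linarith⟩
      · exact Or.inl ⟨hpos, by linarith⟩
  · ext w
    rw [mem_inter_iff, mem_B, mem_B, mem_B, ht3, hb x y w]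
    have ha := q_mem (w - x)
    rcases fract_cases ha ⟨ht1a, ht1b⟩ with ⟨hle, hf⟩ | ⟨hlt, hf⟩
    · rw [hf]
      constructor
      · rintro ⟨⟨h1, h2⟩, h3, h4⟩; linarith
      · rintro ⟨h1, h2⟩
        exact absurd (hle.trans h2) (by push_neg; linarith)
    · rw [hf]
      constructor
      · rintro ⟨⟨h1, h2⟩, h3, h4⟩; exact ⟨h1, by linarith⟩
      · rintro ⟨h1, h2⟩
        exact ⟨⟨h1, by linarith⟩, ⟨by linarith, by linarith⟩⟩


lemma q3_cases (x y z : T1) :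
    (q (y - x) + q (z - y) < 1 ∧ q (z - x) = q (y - x) + q (z - y)) ∨
      (1 ≤ q (y - x) + q (z - y) ∧ q (z - x) = q (y - x) + q (z - y) - 1) := by
  have ht1 := q_mem (y - x); have ht2 := q_mem (z - y)
  obtain ⟨a1, b1⟩ := ht1; obtain ⟨a2, b2⟩ := ht2
  rcases lt_or_ge (q (y - x) + q (z - y)) 1 with h | h
  · exact Or.inl ⟨h, by rw [q_sum_decomp x y z, Int.fract_eq_self.mpr ⟨by linarith, h⟩]⟩
  · refine Or.inr ⟨h, ?_⟩
    have h1 : Int.fract (q (y - x) + q (z - y)) =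
        Int.fract (q (y - x) + q (z - y) - ((1:ℤ):ℝ)) := (Int.fract_sub_intCast _ _).symm
    rw [q_sum_decomp x y z, h1]
    have hm : (0:ℝ) ≤ q (y - x) + q (z - y) - 1 ∧ q (y - x) + q (z - y) - 1 < 1 :=
      ⟨by linarith, by linarith⟩
    have h2 := Int.fract_eq_self.mpr hm
    norm_num at h2 ⊢
    exact h2

variable (μ : Measure T1) [IsProbabilityMeasure μ]

lemma measure_B_ne_top (x : T1) (t : ℝ) : μ (B x t) ≠ ⊤ := measure_ne_top μ _

lemma measure_L1 (x y z : T1) :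
    (μ (B x (q (y - x)))).toReal + (μ (B y (q (z - y)))).toReal =
      (μ (B x (q (z - x)))).toReal + (q (y - x) + q (z - y) - q (z - x)) := by
  rcases q3_cases x y z with ⟨h, ht3⟩ | ⟨h, ht3⟩
  · obtain ⟨hdisj, huni⟩ := arc_nowrap x y z h
    have := measure_union (μ := μ) hdisj (measurableSet_B y _)
    rw [huni] at this
    have hfin1 := measure_B_ne_top μ x (q (y - x))
    have hfin2 := measure_B_ne_top μ y (q (z - y))
    have := congrArg ENNReal.toReal this
    rw [ENNReal.toReal_add hfin1 hfin2] at this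
    rw [ht3] at this ⊢; linarith [this]
  · obtain ⟨huniv, hint⟩ := arc_wrap x y z h
    have key := measure_union_add_inter (μ := μ) (B x (q (y - x))) (measurableSet_B y (q (z - y)))
    rw [huniv, hint] at key
    have h1 : μ (univ : Set T1) = 1 := measure_univ
    rw [h1] at key
    have hfin1 := measure_B_ne_top μ x (q (y - x))
    have hfin2 := measure_B_ne_top μ y (q (z - y))
    have hfin3 := measure_B_ne_top μ x (q (z - x))
    have := congrArg ENNReal.toReal key
    rw [ENNReal.toReal_add (by simp) hfin3, ENNReal.toReal_add hfin1 hfin2] at this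
    simp only [ENNReal.toReal_one] at this
    rw [ht3] at this ⊢; linarith [this]

-- lift lemmas
lemma B_eq_coe_image (x : T1) (a t : ℝ) (hx : ((a : ℝ) : T1) = x) (ht : t ∈ Ico (0:ℝ) 1) :
    B x t = (fun u : ℝ => ((u : ℝ) : T1)) '' Ioc a (a + t) := by
  ext z
  constructor
  · intro hz
    obtain ⟨h1, h2⟩ := hz
    refine ⟨a + q (z - x), ⟨by linarith, by linarith⟩, ?_⟩
    show (((a + q (z - x) : ℝ)) : T1) = z
    have : (((a + q (z - x) : ℝ)) : T1) = ((a:ℝ):T1) + ((q (z - x) : ℝ) : T1) := by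
      exact_mod_cast rfl
    rw [this, hx, coe_q]; abel
  · rintro ⟨u, hu, rfl⟩
    have h1 : ((u:ℝ):T1) - x = (((u - a : ℝ)) : T1) := by
      rw [← hx]; exact_mod_cast rfl
    have h2 : q (((u - a : ℝ)) : T1) = u - a := by
      rw [q_coe, Int.fract_eq_self.mpr ⟨by linarith [hu.1], by linarith [hu.2, ht.2]⟩]
    show q (((u:ℝ):T1) - x) ∈ Ioc 0 t
    rw [h1, h2]
    exact ⟨by linarith [hu.1], by linarith [hu.2]⟩

lemma map_B {f : T1 → T1} {F : ℝ → ℝ} (hF : IsLiftOf F f) (x y : T1) :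
    f '' B x (q (y - x)) = B (f x) (q (f y - f x)) := by
  obtain ⟨Fc, Fm, Fp, Fs⟩ := hF
  set a := q x with ha
  set t := q (y - x) with htdef
  have hx : ((a : ℝ) : T1) = x := coe_q x
  have ht := q_mem (y - x)
  have hy : (((a + t : ℝ)) : T1) = y := by
    have : (((a + t : ℝ)) : T1) = ((a:ℝ):T1) + ((t:ℝ):T1) := by exact_mod_cast rfl
    rw [this, hx, htdef, coe_q]; abel
  have ht' : F (a + t) - F a ∈ Ico (0:ℝ) 1 := by
    constructor
    · have := Fm.monotone (by linarith [ht.1] : a ≤ a + t); linarith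
    · have h2 : F (a + t) < F (a + 1) := Fm (by linarith [ht.2])
      rw [Fp a] at h2; linarith
  -- surjectivity of F
  have hZ : ∀ (n : ℕ) (u : ℝ), F (u + n) = F u + n := by
    intro n
    induction n with
    | zero => simp
    | succ m ih =>
      intro u
      have h : u + ((m : ℝ) + 1) = (u + m) + 1 := by ring
      push_cast
      rw [h, Fp, ih]; ring
  have hsurj : Function.Surjective F := by
    apply Fc.surjective
    · apply tendsto_atTop_atTop_of_monotone Fm.monotone
      intro b
      obtain ⟨n, hn⟩ := exists_nat_ge (b - F 0)
      exact ⟨(n : ℝ), by rw [show ((n:ℝ)) = 0 + (n:ℕ) by simp, hZ]; linarith⟩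
    · apply tendsto_atBot_atBot_of_monotone Fm.monotone
      intro b
      obtain ⟨n, hn⟩ := exists_nat_ge (F 0 - b)
      refine ⟨-(n : ℝ), ?_⟩
      have h0 : F (-(n:ℝ) + (n:ℕ)) = F (-(n:ℝ)) + n := hZ n _
      simp only [neg_add_cancel] at h0
      linarith
  have himg : F '' Ioc a (a + t) = Ioc (F a) (F (a + t)) := by
    have e : ℝ ≃o ℝ := StrictMono.orderIsoOfSurjective F Fm hsurj
    have : (StrictMono.orderIsoOfSurjective F Fm hsurj : ℝ → ℝ) = F := rfl
    rw [← this]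
    exact OrderIso.image_Ioc _ a (a + t)
  rw [B_eq_coe_image x a t hx ⟨ht.1, ht.2⟩]
  rw [← Set.image_comp]
  have hcomp : (f ∘ fun u : ℝ => ((u:ℝ):T1)) = fun u : ℝ => ((F u : ℝ) : T1) := by
    funext u; exact (Fs u).symm
  rw [hcomp]
  have : (fun u : ℝ => ((F u : ℝ) : T1)) '' Ioc a (a + t)
      = (fun v : ℝ => ((v:ℝ):T1)) '' (F '' Ioc a (a + t)) := by
    rw [← Set.image_comp]; rfl
  rw [this, himg]
  have hEq : Ioc (F a) (F (a + t)) = Ioc (F a) (F a + (F (a + t) - F a)) := by ring_nf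
  rw [hEq]
  rw [← B_eq_coe_image (f x) (F a) (F (a + t) - F a) (by rw [Fs a, hx]) ht']
  congr 1
  -- q (f y - f x) = F (a+t) - F a
  have h1 : f y - f x = (((F (a + t) - F a : ℝ)) : T1) := by
    rw [← hy, ← hx, ← Fs, ← Fs]
    exact_mod_cast rfl
  rw [h1, q_coe, Int.fract_eq_self.mpr ⟨ht'.1, ht'.2⟩]


lemma wrap01 (x y z : T1) :
    q (y - x) + q (z - y) - q (z - x) = 0 ∨ q (y - x) + q (z - y) - q (z - x) = 1 := by
  rcases q3_cases x y z with ⟨_, h⟩ | ⟨_, h⟩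
  · left; rw [h]; ring
  · right; rw [h]; ring

section Action
variable {G : Type*} [CommGroup G] [MulAction G T1]
variable (hlift : ∀ g : G, ∃ F : ℝ → ℝ, IsLiftOf F (fun x : T1 => g • x))
variable (hcont : ∀ g : G, Continuous fun x : T1 => g • x)
variable (hfree : ∀ (g : G) (x : T1), g • x = x → g = 1)
variable (μ : Measure T1) [IsProbabilityMeasure μ]
variable (hμinv : ∀ g : G, Measure.map (fun x : T1 => g • x) μ = μ)

include hcont hμinv in
lemma measure_image_smul (h : G) (A : Set T1) (hA : MeasurableSet A) :
    μ ((fun z : T1 => h • z) '' A) = μ A := by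
  have himg : (fun z : T1 => h • z) '' A = (fun z : T1 => h⁻¹ • z) ⁻¹' A := by
    ext z
    constructor
    · rintro ⟨w, hw, rfl⟩; simpa [inv_smul_smul] using hw
    · intro hz; exact ⟨h⁻¹ • z, hz, by simp [smul_inv_smul]⟩
  rw [himg, ← Measure.map_apply ((hcont h⁻¹).measurable) hA, hμinv h⁻¹]

include hlift hcont hμinv in
lemma minv (h : G) (x y : T1) :
    μ (B (h • x) (q (h • y - h • x))) = μ (B x (q (y - x))) := by
  obtain ⟨F, hF⟩ := hlift h
  rw [← map_B hF x y]
  exact measure_image_smul hcont μ hμinv h _ (measurableSet_B x _)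

include hlift hcont hfree hμinv in
lemma no_zero_arc (g : G) (hg : g ≠ 1) (x : T1) :
    μ (B x (q (g • x - x))) ≠ 0 := by
  intro h0
  set s : ℕ → ℝ := fun n => q ((g ^ n) • x - x) with hs
  have hpow : ∀ n : ℕ, (g ^ (n+1)) • x = (g ^ n) • (g • x) := by
    intro n; rw [pow_succ, mul_smul]
  have hne : ∀ n : ℕ, (g ^ (n+1)) • x ≠ (g ^ n) • x := by
    intro n heq
    rw [pow_succ', mul_smul] at heq
    exact hg (hfree g _ heq)
  have harc0 : ∀ n : ℕ, μ (B ((g ^ n) • x) (q ((g ^ (n+1)) • x - (g ^ n) • x))) = 0 := by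
    intro n
    rw [hpow n, minv hlift hcont μ hμinv (g ^ n) x (g • x)]
    exact h0
  have main : ∀ n : ℕ, μ (B x (s n)) = 0 ∧ s (n+1) = s n + q ((g ^ (n+1)) • x - (g ^ n) • x) := by
    have step : ∀ n : ℕ, μ (B x (s n)) = 0 →
        μ (B x (s (n+1))) = 0 ∧ s (n+1) = s n + q ((g ^ (n+1)) • x - (g ^ n) • x) := by
      intro n ih
      have L := measure_L1 μ x ((g ^ n) • x) ((g ^ (n+1)) • x)
      rw [harc0 n] at L
      simp only [ENNReal.toReal_zero] at L
      have h1 : (μ (B x (s n))).toReal = 0 := by rw [ih]; simp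
      rw [show q ((g ^ n) • x - x) = s n from rfl] at L
      rw [h1] at L
      have hw := wrap01 x ((g ^ n) • x) ((g ^ (n+1)) • x)
      have hm3 : (0:ℝ) ≤ (μ (B x (q ((g ^ (n+1)) • x - x)))).toReal := ENNReal.toReal_nonneg
      rcases hw with hw | hw
      · have hm3' : (μ (B x (s (n+1)))).toReal = 0 := by
          have : (μ (B x (q ((g ^ (n+1)) • x - x)))).toReal = 0 := by linarith
          exact this
        constructor
        · exact (ENNReal.toReal_eq_zero_iff _).mp hm3' |>.resolve_right (measure_ne_top μ _)
        · show s (n+1) = s n + _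
          have := hw
          simp only [hs]
          linarith [this]
      · exfalso; linarith
    have hzero : ∀ n : ℕ, μ (B x (s n)) = 0 := by
      intro n
      induction n with
      | zero =>
        have h00 : s 0 = 0 := by simp only [hs, pow_zero, one_smul, sub_self, q_zero]
        rw [h00, B_zero]; simp
      | succ m ih => exact (step m ih).1
    exact fun n => ⟨hzero n, (step n (hzero n)).2⟩
  have hd : ∀ n : ℕ, 0 < q ((g ^ (n+1)) • x - (g ^ n) • x) := by
    intro n
    rcases (q_mem ((g ^ (n+1)) • x - (g ^ n) • x)).1.lt_or_eq with h | h
    · exact h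
    · exfalso
      exact hne n (by
        have := q_eq_zero_iff.mp h.symm
        exact sub_eq_zero.mp this)
  have hmono : StrictMono s := by
    apply strictMono_nat_of_lt_succ
    intro n
    rw [(main n).2]
    linarith [hd n]
  have hbdd : ∀ n, s n < 1 := fun n => (q_mem _).2
  have hconv : Tendsto s atTop (nhds (⨆ n, s n)) :=
    tendsto_atTop_ciSup hmono.monotone ⟨1, fun r ⟨n, hn⟩ => hn ▸ (hbdd n).le⟩
  have hxs : ∀ n : ℕ, (g ^ n) • x = x + ((s n : ℝ) : T1) := by
    intro n
    have := coe_q ((g ^ n) • x - x)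
    rw [show ((s n : ℝ) : T1) = ((q ((g ^ n) • x - x) : ℝ) : T1) from rfl, this]
    abel
  set z : T1 := x + ((⨆ n, s n : ℝ) : T1) with hz
  have hcoe : Continuous fun r : ℝ => x + ((r : ℝ) : T1) :=
    continuous_const.add (AddCircle.continuous_mk' 1)
  have htend : Tendsto (fun n => (g ^ n) • x) atTop (nhds z) := by
    simp only [hxs]
    exact (hcoe.tendsto _).comp hconv
  have htend1 : Tendsto (fun n => (g ^ (n+1)) • x) atTop (nhds z) :=
    htend.comp (tendsto_add_atTop_nat 1)
  have htend2 : Tendsto (fun n => (g ^ (n+1)) • x) atTop (nhds (g • z)) := by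
    have : (fun n => (g ^ (n+1)) • x) = (fun w : T1 => g • w) ∘ fun n => (g ^ n) • x := by
      funext n; simp [pow_succ', mul_smul]
    rw [this]
    exact ((hcont g).tendsto z).comp htend
  exact hg (hfree g z (tendsto_nhds_unique htend2 htend1))

include hlift hcont hfree hμinv in
lemma arc_pos (g : G) (hg : g ≠ 1) (x : T1) :
    0 < (μ (B x (q (g • x - x)))).toReal :=
  ENNReal.toReal_pos (no_zero_arc hlift hcont hfree μ hμinv g hg x) (measure_ne_top μ _)

include hlift hcont hfree hμinv in
lemma arc_lt_one (g : G) (hg : g ≠ 1) (x : T1) :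
    (μ (B x (q (g • x - x)))).toReal < 1 := by
  have hne : g • x ≠ x := fun h => hg (hfree g x h)
  have ht1 : 0 < q (g • x - x) := by
    rcases (q_mem (g • x - x)).1.lt_or_eq with h | h
    · exact h
    · exact absurd (sub_eq_zero.mp (q_eq_zero_iff.mp h.symm)) hne
  have ht2 : 0 < q (x - g • x) := by
    rcases (q_mem (x - g • x)).1.lt_or_eq with h | h
    · exact h
    · exact absurd (sub_eq_zero.mp (q_eq_zero_iff.mp h.symm)) hne.symm
  have L := measure_L1 μ x (g • x) x
  have hxx : q (x - x) = 0 := by rw [sub_self, q_zero]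
  have hsum : q (g • x - x) + q (x - g • x) = 1 := by
    rcases q3_cases x (g • x) x with ⟨_, h⟩ | ⟨_, h⟩
    · rw [hxx] at h; linarith
    · rw [hxx] at h; linarith
  rw [hxx] at L
  have hm3 : μ (B x (0:ℝ)) = 0 := by rw [B_zero]; simp
  rw [hm3] at L
  simp only [ENNReal.toReal_zero] at L
  have hm2pos : 0 < (μ (B (g • x) (q (x - g • x)))).toReal := by
    have hx' : x = g⁻¹ • (g • x) := by simp
    have : q (x - g • x) = q (g⁻¹ • (g • x) - g • x) := by rw [← hx']
    rw [this]
    exact arc_pos hlift hcont hfree μ hμinv g⁻¹ (by simpa using hg) (g • x)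
  linarith

include hlift hcont hfree hμinv in
lemma psi_const (g : G) (hg : g ≠ 1) (x y : T1) :
    (μ (B x (q (g • x - x)))).toReal = (μ (B y (q (g • y - y)))).toReal := by
  have L1a := measure_L1 μ x y (g • y)
  have L1b := measure_L1 μ x (g • x) (g • y)
  have h3 : (μ (B (g • x) (q (g • y - g • x)))).toReal = (μ (B x (q (y - x)))).toReal := by
    rw [minv hlift hcont μ hμinv g x y]
  have pax := arc_pos hlift hcont hfree μ hμinv g hg x
  have pay := arc_pos hlift hcont hfree μ hμinv g hg y
  have pbx := arc_lt_one hlift hcont hfree μ hμinv g hg x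
  have pby := arc_lt_one hlift hcont hfree μ hμinv g hg y
  have w1 := wrap01 x y (g • y)
  have w2 := wrap01 x (g • x) (g • y)
  rcases w1 with w1 | w1 <;> rcases w2 with w2 | w2 <;> linarith

end Action

lemma int_coe_zero (m : ℤ) : (((m : ℝ)) : T1) = 0 := by
  rw [QuotientAddGroup.eq_zero_iff]
  have : (m : ℝ) = m • (1:ℝ) := by simp
  rw [this]
  exact AddSubgroup.zsmul_mem_zmultiples (1:ℝ) m

lemma coe_add_int (t : ℝ) (m : ℤ) : (((t + m : ℝ)) : T1) = ((t : ℝ) : T1) := by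
  have h : (((t + m : ℝ)) : T1) = ((t:ℝ) : T1) + (((m:ℝ)) : T1) := by exact_mod_cast rfl
  rw [h, int_coe_zero, add_zero]

section Final
variable {G : Type*} [CommGroup G] [MulAction G T1]

theorem rot_eq
    (hfree : ∀ (g : G) (x : T1), g • x = x → g = 1)
    (μ : Measure T1) [IsProbabilityMeasure μ]
    (g : G) (hg : g ≠ 1) (c : ℝ) (hc : c ∈ Ioo (0:ℝ) 1)
    (hpsi : ∀ z : T1, (μ (B z (q (g • z - z)))).toReal = c)
    {F : ℝ → ℝ} (hF : IsLiftOf F (fun x : T1 => g • x))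
    {ρg : T1} (hlim : Tendsto (fun n : ℕ => ((F^[n] 0 / (n : ℝ) : ℝ) : T1)) atTop (nhds ρg)) :
    ρg = ((c : ℝ) : T1) := by
  obtain ⟨Fc, Fm, Fp, Fs⟩ := hF
  have fract_def : ∀ r : ℝ, Int.fract r = r - ⌊r⌋ := fun r => rfl
  -- key recursion in measure form
  have key : ∀ t : ℝ, (μ (B 0 (q ((((F t : ℝ)) : T1) - 0)))).toReal =
      (μ (B 0 (q (((t : ℝ) : T1) - 0)))).toReal + c
        + (Int.fract (F t) - Int.fract t - Int.fract (F t - t)) := by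
    intro t
    have L := measure_L1 μ 0 ((t:ℝ) : T1) (g • ((t:ℝ) : T1))
    rw [hpsi (((t:ℝ)) : T1)] at L
    have e2 : g • ((t:ℝ):T1) = ((F t : ℝ) : T1) := (Fs t).symm
    have e1 : q (((t:ℝ):T1) - 0) = Int.fract t := by rw [sub_zero, q_coe]
    have e3 : q (g • ((t:ℝ):T1) - ((t:ℝ):T1)) = Int.fract (F t - t) := by
      rw [e2]
      have h' : ((F t : ℝ) : T1) - ((t:ℝ):T1) = (((F t - t : ℝ)) : T1) := by exact_mod_cast rfl
      rw [h', q_coe]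
    have e4 : q (g • ((t:ℝ):T1) - 0) = Int.fract (F t) := by rw [sub_zero, e2, q_coe]
    rw [e2] at L
    rw [e2] at e3 e4
    linarith [L, e1, e3, e4]
  -- lifted semiconjugacy function
  set φ : ℝ → ℝ := fun t => ((⌊t⌋ : ℤ) : ℝ) + (μ (B 0 (q (((t : ℝ) : T1) - 0)))).toReal with hφ
  have hrec0 : ∀ t : ℝ, φ (F t) = φ t + c + ((⌊F t - t⌋ : ℤ) : ℝ) := by
    intro t
    have k := key t
    have f1 := fract_def (F t)
    have f2 := fract_def t
    have f3 := fract_def (F t - t)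
    simp only [hφ]
    linarith [k]
  -- the displacement misses the integers
  have hnotint : ∀ (t : ℝ) (m : ℤ), F t - t ≠ (m : ℝ) := by
    intro t m he
    have hFt : F t = t + m := by linarith
    have hs : g • ((t:ℝ):T1) = ((F t : ℝ) : T1) := (Fs t).symm
    have : g • ((t:ℝ):T1) = ((t:ℝ):T1) := by
      rw [hs, hFt]; exact coe_add_int t m
    exact hg (hfree g _ this)
  -- the floor of the displacement is constant
  have hD : Continuous fun t : ℝ => F t - t := Fc.sub continuous_id
  have hKconst : ∀ t : ℝ, ⌊F t - t⌋ = ⌊F 0 - 0⌋ := by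
    set K0 : ℤ := ⌊F 0 - 0⌋ with hK0
    set S : Set ℝ := {t | ⌊F t - t⌋ = K0} with hS
    have hmemIoo : ∀ t : ℝ, (((⌊F t - t⌋ : ℤ) : ℝ)) < F t - t ∧ F t - t < ((⌊F t - t⌋ : ℤ) : ℝ) + 1 := by
      intro t
      refine ⟨lt_of_le_of_ne (Int.floor_le _) ?_, Int.lt_floor_add_one _⟩
      intro h; exact hnotint t _ h.symm
    have hopen : ∀ (t : ℝ), ∃ U : Set ℝ, IsOpen U ∧ t ∈ U ∧ ∀ s ∈ U, ⌊F s - s⌋ = ⌊F t - t⌋ := by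
      intro t
      refine ⟨(fun s : ℝ => F s - s) ⁻¹' Ioo ((⌊F t - t⌋ : ℝ)) ((⌊F t - t⌋ : ℝ) + 1),
        isOpen_Ioo.preimage hD, ⟨(hmemIoo t).1, (hmemIoo t).2⟩, ?_⟩
      intro s hs
      exact Int.floor_eq_iff.mpr ⟨le_of_lt hs.1, hs.2⟩
    have hclopen : IsClopen S := by
      constructor
      · rw [← isOpen_compl_iff]
        rw [isOpen_iff_forall_mem_open]
        intro t ht
        obtain ⟨U, hU, htU, hUfl⟩ := hopen t
        exact ⟨U, fun s hsU => by simp only [mem_compl_iff, hS, mem_setOf_eq, hUfl s hsU]; exact ht, hU, htU⟩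
      · rw [isOpen_iff_forall_mem_open]
        intro t ht
        obtain ⟨U, hU, htU, hUfl⟩ := hopen t
        exact ⟨U, fun s hsU => by simp only [hS, mem_setOf_eq, hUfl s hsU]; exact ht, hU, htU⟩
    have : S = univ := hclopen.eq_univ ⟨0, rfl⟩
    intro t
    have := this ▸ (mem_univ t)
    exact this
  set K : ℤ := ⌊F 0 - 0⌋ with hK
  have hrec : ∀ t : ℝ, φ (F t) = φ t + (c + (K : ℝ)) := by
    intro t; rw [hrec0 t, hKconst t]; ring
  -- iterate
  have hiter : ∀ n : ℕ, φ (F^[n] 0) = n * (c + (K : ℝ)) := by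
    intro n
    induction n with
    | zero =>
      simp only [Function.iterate_zero, id_eq, Nat.cast_zero, zero_mul]
      have h0 : ((0:ℝ) : T1) - 0 = 0 := by norm_num
      simp only [hφ, h0, q_zero, B_zero]
      simp
    | succ m ih =>
      rw [Function.iterate_succ_apply', hrec, ih]
      push_cast; ring
  -- bound |φ u - u| ≤ 1
  have hbound : ∀ u : ℝ, |φ u - u| ≤ 1 := by
    intro u
    have h1 : (μ (B 0 (q (((u : ℝ) : T1) - 0)))).toReal ∈ Icc (0:ℝ) 1 := by
      constructor
      · exact ENNReal.toReal_nonneg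
      · have := (ENNReal.toReal_le_toReal (measure_ne_top μ (B 0 (q (((u : ℝ) : T1) - 0)))) ENNReal.one_ne_top).mpr (prob_le_one (μ := μ))
        simpa using this
    have h2 : Int.fract u ∈ Ico (0:ℝ) 1 := ⟨Int.fract_nonneg u, Int.fract_lt_one u⟩
    have h3 : φ u - u = (μ (B 0 (q (((u : ℝ) : T1) - 0)))).toReal - Int.fract u := by
      simp only [hφ]; rw [fract_def u]; ring
    rw [h3, abs_le]
    exact ⟨by linarith [h1.1, h2.2], by linarith [h1.2, h2.1]⟩
  -- limit
  have hlim2 : Tendsto (fun n : ℕ => F^[n] 0 / (n : ℝ)) atTop (nhds (c + (K : ℝ))) := by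
    have hdiff : Tendsto (fun n : ℕ => F^[n] 0 / (n : ℝ) - (c + (K : ℝ))) atTop (nhds 0) := by
      apply squeeze_zero_norm' (a := fun n : ℕ => 2 / (n : ℝ))
      · filter_upwards [eventually_ge_atTop 1] with n hn
        have hnpos : (0:ℝ) < n := by exact_mod_cast hn
        have hb := hbound (F^[n] 0)
        have hi := hiter n
        have h1 : |F^[n] 0 - n * (c + (K:ℝ))| ≤ 1 := by
          rw [← hi, abs_sub_comm]
          exact hb
        have heq : F^[n] 0 / n - (c + (K:ℝ)) = (F^[n] 0 - n * (c + (K:ℝ))) / n := by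
          field_simp
        rw [heq, Real.norm_eq_abs, abs_div, abs_of_pos hnpos]
        have h2' : |F^[n] 0 - n * (c + (K:ℝ))| ≤ 2 := le_trans h1 (by norm_num)
        gcongr
      · exact tendsto_const_div_atTop_nhds_zero_nat 2
    have := hdiff.add_const (c + (K:ℝ))
    simpa using this
  have hcont : Continuous fun r : ℝ => ((r : ℝ) : T1) := AddCircle.continuous_mk' 1
  have hlim3 : Tendsto (fun n : ℕ => ((F^[n] 0 / (n : ℝ) : ℝ) : T1)) atTop
      (nhds (((c + (K:ℝ) : ℝ)) : T1)) := (hcont.tendsto _).comp hlim2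
  have := tendsto_nhds_unique hlim hlim3
  rw [this, coe_add_int]

end Final

end S13

/-- for a Denjoy action of a countably infinite discrete abelian
group with unique invariant probability measure `μ` and injective rotation number
homomorphism `ρ`, the measure of the positively-oriented arc `(x, gx]` equals `ρ(g)`
(as the representative in `[0,1)`); in particular it is independent of `x`. -/
theorem statement13 (G : Type*) [CommGroup G] [Countable G] [Infinite G]
    [MulAction G T1]
    (hD : IsDenjoy G) (hfree : FreeAction G)
    (ρ : G → T1) (hρhom : ∀ g h : G, ρ (g * h) = ρ g + ρ h)
    (hρinj : Function.Injective ρ)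
    (hρ : ∀ g : G, HasRotationNumber (fun x : T1 => g • x) (ρ g))
    (μ : Measure T1) [IsProbabilityMeasure μ] (hμreg : μ.Regular)
    (hμinv : ∀ g : G, Measure.map (fun x : T1 => g • x) μ = μ)
    (hμuniq : ∀ ν : Measure T1, IsProbabilityMeasure ν → ν.Regular →
      (∀ g : G, Measure.map (fun x : T1 => g • x) ν = ν) → ν = μ) :
    ∀ (g : G) (x : T1),
      μ ((fun t : ℝ => x + (t : T1)) '' Set.Ioc 0 (repIco ((g • x) - x))) =
        ENNReal.ofReal (repIco (ρ g)) := by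
  intro g x
  classical
  have hcont : ∀ h : G, Continuous fun z : T1 => h • z := hD.1.1
  have hlift : ∀ h : G, ∃ F : ℝ → ℝ, IsLiftOf F (fun z : T1 => h • z) := by
    intro h
    obtain ⟨F, hF, -⟩ := hρ h
    exact ⟨F, hF⟩
  by_cases hg : g = 1
  · subst hg
    have hρ1 : ρ 1 = 0 := by
      have h := hρhom 1 1
      rw [mul_one] at h
      have : ρ 1 + 0 = ρ 1 + ρ 1 := by rw [add_zero]; exact h
      exact (add_left_cancel this).symm
    have h1 : (1 : G) • x - x = 0 := by rw [one_smul, sub_self]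
    rw [h1, S13.q_zero, hρ1, S13.q_zero]
    simp
  · -- main case
    set c : ℝ := (μ (S13.B x (repIco (g • x - x)))).toReal with hc
    have hpsi : ∀ z : T1, (μ (S13.B z (repIco (g • z - z)))).toReal = c :=
      fun z => S13.psi_const hlift hcont hfree μ hμinv g hg z x
    have hcmem : c ∈ Set.Ioo (0:ℝ) 1 :=
      ⟨S13.arc_pos hlift hcont hfree μ hμinv g hg x,
        S13.arc_lt_one hlift hcont hfree μ hμinv g hg x⟩
    obtain ⟨F, hF, hlimF⟩ := hρ g
    have hrot : ρ g = ((c : ℝ) : T1) :=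
      S13.rot_eq hfree μ g hg c hcmem hpsi hF (hlimF 0)
    have hqρ : repIco (ρ g) = c := by
      rw [hrot, S13.q_coe, Int.fract_eq_self.mpr ⟨hcmem.1.le, hcmem.2⟩]
    rw [hqρ]
    rw [S13.B_eq_image x (S13.q_mem (g • x - x)).2]
    rw [hc, ENNReal.ofReal_toReal (measure_ne_top μ _)]
end
end
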